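/- arXiv:2207.11273 — 5 statements merged into one kernel-verified Lean document; each statement's English description precedes it below -/
import Mathlib

section
/- Let n ≥ 2 and let w be a word of length n such that each letter occurs at most n/4 times in w. Then f(w) = n + 2. -/
namespace WordGrid

variable {α : Type*}

/-- The `i`-th row of the grid `G` contains the word `w` (forwards or backwards). -/
def rowC {n : ℕ} (w : Fin n → α) (G : Fin n → Fin n → α) (i : Fin n) : Prop :=
  (∀ j, G i j = w j) ∨ (∀ j, G i j = w j.rev)

/-- The `i`-th column of the grid `G` contains the word `w` (forwards or backwards). -/
def colC {n : ℕ} (w : Fin n → α) (G : Fin n → Fin n → α) (i : Fin n) : Prop :=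
  (∀ j, G j i = w j) ∨ (∀ j, G j i = w j.rev)

/-- The main diagonal of the grid `G` contains the word `w`. -/
def diagC {n : ℕ} (w : Fin n → α) (G : Fin n → Fin n → α) : Prop :=
  (∀ j, G j j = w j) ∨ (∀ j, G j j = w j.rev)

/-- The anti-diagonal of the grid `G` contains the word `w`. -/
def adiagC {n : ℕ} (w : Fin n → α) (G : Fin n → Fin n → α) : Prop :=
  (∀ j, G j j.rev = w j) ∨ (∀ j, G j j.rev = w j.rev)

open Classical in
/-- `f(w,G)`: the number of rows, columns and diagonals of `G` containing `w`. -/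
noncomputable def count {n : ℕ} (w : Fin n → α) (G : Fin n → Fin n → α) : ℕ :=
  {i | rowC w G i}.ncard + {i | colC w G i}.ncard
    + (if diagC w G then 1 else 0) + (if adiagC w G then 1 else 0)

/-- `f(w)`: the maximum of `f(w,G)` over all `n`-grids `G`. -/
noncomputable def fword {n : ℕ} (w : Fin n → α) : ℕ :=
  sSup {m | ∃ G : Fin n → Fin n → α, count w G = m}

lemma half_bound {n : ℕ} (w : Fin n → α)
    (h : ∀ a : α, 4 * {i | w i = a}.ncard ≤ n) (S : Set (Fin n)) (a b : α)
    (hS : ∀ i ∈ S, w i = a ∨ w i = b) : 2 * S.ncard ≤ n := by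
  have hsub : S ⊆ {i | w i = a} ∪ {i | w i = b} := fun i hi => hS i hi
  have h1 : S.ncard ≤ {i | w i = a}.ncard + {i | w i = b}.ncard :=
    le_trans (Set.ncard_le_ncard hsub (Set.toFinite _)) (Set.ncard_union_le _ _)
  have ha := h a; have hb := h b; omega

lemma half_bound' {n : ℕ} (w : Fin n → α)
    (h : ∀ a : α, 4 * {i | w i = a}.ncard ≤ n) (S : Set (Fin n)) (a b : α)
    (hS : ∀ i ∈ S, w i.rev = a ∨ w i.rev = b) : 2 * S.ncard ≤ n := by
  have := half_bound w h (Fin.rev '' S) a b ?_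
  · rwa [Set.ncard_image_of_injective _ Fin.rev_injective] at this
  · rintro i ⟨i', hi', rfl⟩; exact hS i' hi'

lemma rowcol_bound {n : ℕ} (w : Fin n → α)
    (h : ∀ a : α, 4 * {i | w i = a}.ncard ≤ n) (G : Fin n → Fin n → α) :
    {i | rowC w G i}.ncard + {i | colC w G i}.ncard ≤ n := by
  set R := {i | rowC w G i} with hR
  set C := {i | colC w G i} with hC
  rcases C.eq_empty_or_nonempty with hCe | ⟨j₀, hj₀⟩
  · rw [hCe, Set.ncard_empty]
    have : R.ncard ≤ (Set.univ : Set (Fin n)).ncard :=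
      Set.ncard_le_ncard (Set.subset_univ _) (Set.toFinite _)
    simpa [Set.ncard_univ] using this
  rcases R.eq_empty_or_nonempty with hRe | ⟨i₀, hi₀⟩
  · rw [hRe, Set.ncard_empty]
    have : C.ncard ≤ (Set.univ : Set (Fin n)).ncard :=
      Set.ncard_le_ncard (Set.subset_univ _) (Set.toFinite _)
    simpa [Set.ncard_univ] using this
  -- both nonempty
  have hRb : 2 * R.ncard ≤ n := by
    rcases hj₀ with hA | hB
    · refine half_bound w h R (w j₀) (w j₀.rev) ?_
      intro i hi
      rcases hi with h1 | h2
      · exact Or.inl ((hA i).symm.trans (h1 j₀))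
      · exact Or.inr ((hA i).symm.trans (h2 j₀))
    · refine half_bound' w h R (w j₀) (w j₀.rev) ?_
      intro i hi
      rcases hi with h1 | h2
      · exact Or.inl ((hB i).symm.trans (h1 j₀))
      · exact Or.inr ((hB i).symm.trans (h2 j₀))
  have hCb : 2 * C.ncard ≤ n := by
    rcases hi₀ with hA | hB
    · refine half_bound w h C (w i₀) (w i₀.rev) ?_
      intro j hj
      rcases hj with h1 | h2
      · exact Or.inl ((hA j).symm.trans (h1 i₀))
      · exact Or.inr ((hA j).symm.trans (h2 i₀))
    · refine half_bound' w h C (w i₀) (w i₀.rev) ?_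
      intro j hj
      rcases hj with h1 | h2
      · exact Or.inl ((hB j).symm.trans (h1 i₀))
      · exact Or.inr ((hB j).symm.trans (h2 i₀))
  omega

lemma count_le {n : ℕ} (w : Fin n → α)
    (h : ∀ a : α, 4 * {i | w i = a}.ncard ≤ n) (G : Fin n → Fin n → α) :
    count w G ≤ n + 2 := by
  have := rowcol_bound w h G
  unfold count
  split <;> split <;> omega

lemma count_grid {n : ℕ} (hn : 2 ≤ n) (w : Fin n → α)
    (h : ∀ a : α, 4 * {i | w i = a}.ncard ≤ n) :
    count w (fun _ j => w j) = n + 2 := by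
  have hrow : {i | rowC w (fun _ j => w j) i} = Set.univ := by
    ext i; simp [rowC]
  have hcol : {i | colC w (fun _ j => w j) i} = ∅ := by
    ext i
    simp only [Set.mem_setOf_eq, Set.mem_empty_iff_false, iff_false]
    rintro (h1 | h2)
    · have huniv : {k | w k = w i} = Set.univ := by
        ext k; simp [(h1 k).symm]
      have h4 := h (w i)
      rw [huniv, Set.ncard_univ, Nat.card_eq_fintype_card, Fintype.card_fin] at h4
      omega
    · have huniv : {k | w k = w i} = Set.univ := by
        ext k
        simp only [Set.mem_setOf_eq, Set.mem_univ, iff_true]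
        have hk := h2 k.rev
        simp only [Fin.rev_rev] at hk
        exact hk.symm
      have h4 := h (w i)
      rw [huniv, Set.ncard_univ, Nat.card_eq_fintype_card, Fintype.card_fin] at h4
      omega
  have hdiag : diagC w (fun _ j => w j) := Or.inl (fun _ => rfl)
  have hadiag : adiagC w (fun _ j => w j) := Or.inr (fun _ => rfl)
  unfold count
  rw [hrow, hcol, if_pos hdiag, if_pos hadiag, Set.ncard_empty, Set.ncard_univ,
    Nat.card_eq_fintype_card, Fintype.card_fin]

theorem few_letters {n : ℕ} (hn : 2 ≤ n) (w : Fin n → α)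
    (h : ∀ a : α, 4 * {i | w i = a}.ncard ≤ n) :
    fword w = n + 2 := by
  have hub : ∀ m ∈ {m | ∃ G : Fin n → Fin n → α, count w G = m}, m ≤ n + 2 := by
    rintro m ⟨G, rfl⟩
    exact count_le w h G
  have hmem : n + 2 ∈ {m | ∃ G : Fin n → Fin n → α, count w G = m} :=
    ⟨_, count_grid hn w h⟩
  exact le_antisymm (csSup_le ⟨n + 2, hmem⟩ hub) (le_csSup ⟨n + 2, hub⟩ hmem)

end WordGrid
end

section
/- For every integer k ≥ 1, setting n = 4k, there exists a word w of length n such that every letter occurs at most 1 + n/4 times in w and f(w) > n + 2. (Concretely, the word consisting of k+1 copies of a letter A, followed by 2k−2 pairwise distinct letters, followed by k+1 copies of a letter M, satisfies f(w) ≥ 4(k+1) > n+2.) -/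
namespace WordGrid

variable {α : Type*}

theorem few_letters_sharp (k : ℕ) (hk : 1 ≤ k) :
    ∃ (α : Type) (w : Fin (4 * k) → α),
      (∀ a : α, {i | w i = a}.ncard ≤ 1 + k) ∧ fword w > 4 * k + 2 := by
  set n := 4 * k with hn
  have hkn : k < n := by omega
  have hmn : 3 * k - 1 < n := by omega
  -- the word
  set w : Fin n → ℕ := fun i => if i.val ≤ k then 0 else if 3 * k - 1 ≤ i.val then 1 else i.val + 2
    with hw
  -- values of w
  have hwA : ∀ i : Fin n, i.val ≤ k → w i = 0 := by
    intro i hi; simp [hw, hi]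
  have hwM : ∀ i : Fin n, 3 * k - 1 ≤ i.val → w i = 1 := by
    intro i hi
    have : ¬ i.val ≤ k := by omega
    simp only [hw, if_neg this]
    rw [if_pos hi]
  have hrevA : ∀ i : Fin n, i.val ≤ k → 3 * k - 1 ≤ (Fin.rev i).val := by
    intro i hi; rw [Fin.val_rev]; omega
  have hrevM : ∀ i : Fin n, 3 * k - 1 ≤ i.val → (Fin.rev i).val ≤ k := by
    intro i hi; rw [Fin.val_rev]; have := i.isLt; omega
  -- the grid
  set G : Fin n → Fin n → ℕ := fun i j =>
    if j.val ≤ k then w i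
    else if 3 * k - 1 ≤ j.val then w (Fin.rev i)
    else if i.val ≤ k then w j
    else w (Fin.rev j) with hG
  -- A-rows are forward rows, M-rows are backward rows
  have hrowA : ∀ i : Fin n, i.val ≤ k → ∀ j, G i j = w j := by
    intro i hi j
    by_cases hj : j.val ≤ k
    · simp only [hG, if_pos hj]; rw [hwA i hi, hwA j hj]
    · by_cases hj2 : 3 * k - 1 ≤ j.val
      · simp only [hG, if_neg hj, if_pos hj2]
        rw [hwM _ (hrevA i hi), hwM j hj2]
      · simp only [hG, if_neg hj, if_neg hj2, if_pos hi]
  have hrowM : ∀ i : Fin n, 3 * k - 1 ≤ i.val → ∀ j, G i j = w (Fin.rev j) := by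
    intro i hi j
    have hik : ¬ i.val ≤ k := by omega
    by_cases hj : j.val ≤ k
    · simp only [hG, if_pos hj]; rw [hwM i hi, hwM _ (hrevA j hj)]
    · by_cases hj2 : 3 * k - 1 ≤ j.val
      · simp only [hG, if_neg hj, if_pos hj2]
        rw [hwA _ (hrevM i hi), hwA _ (hrevM j hj2)]
      · simp only [hG, if_neg hj, if_neg hj2, if_neg hik]
  have hcolA : ∀ j : Fin n, j.val ≤ k → ∀ i, G i j = w i := by
    intro j hj i; simp only [hG, if_pos hj]
  have hcolM : ∀ j : Fin n, 3 * k - 1 ≤ j.val → ∀ i, G i j = w (Fin.rev i) := by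
    intro j hj i
    have : ¬ j.val ≤ k := by omega
    simp only [hG, if_neg this, if_pos hj]
  -- the index set S
  set S : Finset (Fin n) := Finset.Iic ⟨k, hkn⟩ ∪ Finset.Ici ⟨3 * k - 1, hmn⟩ with hS
  have hScard : S.card = 2 * k + 2 := by
    rw [hS, Finset.card_union_of_disjoint, Fin.card_Iic, Fin.card_Ici]
    · simp only [hn]; omega
    · rw [Finset.disjoint_left]
      intro a ha hb
      rw [Finset.mem_Iic, Fin.le_def] at ha
      rw [Finset.mem_Ici, Fin.le_def] at hb
      simp only at ha hb; omega
  have hSmem : ∀ i : Fin n, i ∈ S ↔ (i.val ≤ k ∨ 3 * k - 1 ≤ i.val) := by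
    intro i
    rw [hS, Finset.mem_union, Finset.mem_Iic, Finset.mem_Ici, Fin.le_def, Fin.le_def]
  -- count bound
  have hrowsub : (↑S : Set (Fin n)) ⊆ {i | rowC w G i} := by
    intro i hi
    rw [Finset.mem_coe, hSmem] at hi
    rcases hi with hi | hi
    · exact Or.inl (hrowA i hi)
    · exact Or.inr (hrowM i hi)
  have hcolsub : (↑S : Set (Fin n)) ⊆ {i | colC w G i} := by
    intro i hi
    rw [Finset.mem_coe, hSmem] at hi
    rcases hi with hi | hi
    · exact Or.inl (hcolA i hi)
    · exact Or.inr (hcolM i hi)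
  have hrowcard : 2 * k + 2 ≤ {i | rowC w G i}.ncard := by
    rw [← hScard, ← Set.ncard_coe_finset]
    exact Set.ncard_le_ncard hrowsub (Set.toFinite _)
  have hcolcard : 2 * k + 2 ≤ {i | colC w G i}.ncard := by
    rw [← hScard, ← Set.ncard_coe_finset]
    exact Set.ncard_le_ncard hcolsub (Set.toFinite _)
  have hcount : 4 * k + 3 ≤ count w G := by
    unfold count
    omega
  -- boundedness
  have hbdd : BddAbove {m | ∃ H : Fin n → Fin n → ℕ, count w H = m} := by
    refine ⟨2 * n + 2, ?_⟩
    rintro m ⟨H, rfl⟩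
    have h1 : {i | rowC w H i}.ncard ≤ n := by
      calc {i | rowC w H i}.ncard ≤ (Set.univ : Set (Fin n)).ncard :=
            Set.ncard_le_ncard (Set.subset_univ _) Set.finite_univ
        _ = n := by rw [Set.ncard_univ, Nat.card_eq_fintype_card, Fintype.card_fin]
    have h2 : {i | colC w H i}.ncard ≤ n := by
      calc {i | colC w H i}.ncard ≤ (Set.univ : Set (Fin n)).ncard :=
            Set.ncard_le_ncard (Set.subset_univ _) Set.finite_univ
        _ = n := by rw [Set.ncard_univ, Nat.card_eq_fintype_card, Fintype.card_fin]
    unfold count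
    split <;> split <;> omega
  have hle : count w G ≤ fword w := le_csSup hbdd ⟨G, rfl⟩
  refine ⟨ℕ, w, ?_, by omega⟩
  -- letter counts
  intro a
  by_cases ha0 : a = 0
  · have : {i | w i = a} = ↑(Finset.Iic (⟨k, hkn⟩ : Fin n)) := by
      ext i
      simp only [Set.mem_setOf_eq, Finset.coe_Iic, Set.mem_Iic, Fin.le_def, ha0]
      constructor
      · intro h
        by_contra hc
        simp only [hw] at h
        rw [if_neg hc] at h
        split at h <;> omega
      · intro h; exact hwA i h
    rw [this, Set.ncard_coe_finset, Fin.card_Iic]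
    have hv : ((⟨k, hkn⟩ : Fin n) : ℕ) = k := rfl
    omega
  by_cases ha1 : a = 1
  · have : {i | w i = a} = ↑(Finset.Ici (⟨3 * k - 1, hmn⟩ : Fin n)) := by
      ext i
      simp only [Set.mem_setOf_eq, Finset.coe_Ici, Set.mem_Ici, Fin.le_def, ha1]
      constructor
      · intro h
        by_contra hc
        simp only [hw] at h
        rw [if_neg hc] at h
        split at h <;> omega
      · intro h; exact hwM i h
    rw [this, Set.ncard_coe_finset, Fin.card_Ici]
    have hv : ((⟨3 * k - 1, hmn⟩ : Fin n) : ℕ) = 3 * k - 1 := rfl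
    simp only [hn]; omega
  · -- a ≥ 2: at most one index
    have hsub : {i | w i = a} ⊆ {i : Fin n | i.val = a - 2} := by
      intro i hi
      simp only [Set.mem_setOf_eq, hw] at hi ⊢
      split at hi
      · omega
      · split at hi <;> omega
    have : {i : Fin n | i.val = a - 2}.Subsingleton := by
      intro x hx y hy
      simp only [Set.mem_setOf_eq] at hx hy
      exact Fin.ext (hx.trans hy.symm)
    calc {i | w i = a}.ncard ≤ {i : Fin n | i.val = a - 2}.ncard :=
          Set.ncard_le_ncard hsub (Set.toFinite _)
      _ ≤ 1 := by
          rcases this.eq_empty_or_singleton with h | ⟨x, h⟩ <;> simp [h]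
      _ ≤ 1 + k := by omega

end WordGrid
end

section
/- Let n ≥ 2 and let w be a word of length n such that w_i = w_{n-i+1} for all i (w is a palindrome). Let k be the maximum number of times any single letter appears in w. Then f(w) = max{n, 2k} + 2. -/
namespace WordGrid

variable {α : Type*}

theorem palindrome_fword {n : ℕ} (hn : 2 ≤ n) (w : Fin n → α)
    (hpal : ∀ i, w i = w i.rev) (k : ℕ)
    (hk : IsGreatest {m | ∃ a : α, {i | w i = a}.ncard = m} k) :
    fword w = max n (2 * k) + 2 := by
  classical
  obtain ⟨a, ha⟩ := hk.1
  set m := max n (2 * k) with hm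
  -- every set of indices has at most n elements
  have hle_n : ∀ s : Set (Fin n), s.ncard ≤ n := by
    intro s
    have := Set.ncard_le_ncard (Set.subset_univ s) Set.finite_univ
    simpa [Set.ncard_univ] using this
  -- palindrome simplifications
  have hrev : ∀ j : Fin n, w j.rev = w j := fun j => (hpal j).symm
  have hrow : ∀ (G : Fin n → Fin n → α), {i | rowC w G i} = {i | ∀ j, G i j = w j} := by
    intro G; ext i
    simp only [Set.mem_setOf_eq, rowC]
    constructor
    · rintro (h | h) j
      · exact h j
      · rw [h j, hrev]
    · exact fun h => Or.inl h
  have hcol : ∀ (G : Fin n → Fin n → α), {i | colC w G i} = {i | ∀ j, G j i = w j} := by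
    intro G; ext i
    simp only [Set.mem_setOf_eq, colC]
    constructor
    · rintro (h | h) j
      · exact h j
      · rw [h j, hrev]
    · exact fun h => Or.inl h
  -- upper bound
  have upper : ∀ G : Fin n → Fin n → α, count w G ≤ m + 2 := by
    intro G
    have hmain : {i | rowC w G i}.ncard + {i | colC w G i}.ncard ≤ m := by
      rw [hrow, hcol]
      by_cases hr : {i : Fin n | ∀ j, G i j = w j}.Nonempty
      · by_cases hc : {i : Fin n | ∀ j, G j i = w j}.Nonempty
        · obtain ⟨i0, hi0⟩ := hr
          obtain ⟨j0, hj0⟩ := hc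
          have hb : {i | w i = w i0}.ncard ≤ k := hk.2 ⟨w i0, rfl⟩
          have key : w j0 = w i0 := by rw [← hj0 i0, hi0 j0]
          have hRsub : {i : Fin n | ∀ j, G i j = w j} ⊆ {i | w i = w i0} := by
            intro i hi
            have h1 : G i j0 = w j0 := hi j0
            have h2 : G i j0 = w i := hj0 i
            simp only [Set.mem_setOf_eq]
            rw [← h2, h1, key]
          have hCsub : {i : Fin n | ∀ j, G j i = w j} ⊆ {i | w i = w i0} := by
            intro j hj
            have h1 : G i0 j = w j := hi0 j
            have h2 : G i0 j = w i0 := hj i0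
            simp only [Set.mem_setOf_eq]
            rw [← h2, h1]
          have hR : {i : Fin n | ∀ j, G i j = w j}.ncard ≤ k :=
            le_trans (Set.ncard_le_ncard hRsub (Set.toFinite _)) hb
          have hC : {i : Fin n | ∀ j, G j i = w j}.ncard ≤ k :=
            le_trans (Set.ncard_le_ncard hCsub (Set.toFinite _)) hb
          have : 2 * k ≤ m := le_max_right _ _
          omega
        · rw [Set.not_nonempty_iff_eq_empty.mp hc, Set.ncard_empty, add_zero]
          exact le_trans (hle_n _) (le_max_left _ _)
      · rw [Set.not_nonempty_iff_eq_empty.mp hr, Set.ncard_empty, zero_add]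
        exact le_trans (hle_n _) (le_max_left _ _)
    unfold count
    split_ifs <;> omega
  -- lower bound: a grid achieving m + 2
  have hex : ∃ G : Fin n → Fin n → α, count w G = m + 2 := by
    rcases le_or_gt (2 * k) n with hcase | hcase
    · -- grid with all rows equal to w
      refine ⟨fun _ j => w j, le_antisymm (upper _) ?_⟩
      have hd1 : diagC w (fun _ j => w j) := Or.inl fun j => rfl
      have hd2 : adiagC w (fun _ j => w j) := Or.inr fun j => rfl
      have hRu : {i | rowC w (fun _ j => w j) i} = (Set.univ : Set (Fin n)) := by
        rw [hrow]; ext i; simp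
      unfold count
      rw [if_pos hd1, if_pos hd2, hRu]
      have : (Set.univ : Set (Fin n)).ncard = n := by simp [Set.ncard_univ]
      have hmn : m = n := by omega
      omega
    · -- grid with k rows and k columns
      set S : Set (Fin n) := {i | w i = a} with hSdef
      set G : Fin n → Fin n → α := fun i j => if j ∈ S ∧ i ∉ S then w i else w j with hG
      refine ⟨G, le_antisymm (upper _) ?_⟩
      have hd1 : diagC w G := by
        refine Or.inl fun j => ?_
        simp only [hG]
        rw [if_neg]; tauto
      have hd2 : adiagC w G := by
        refine Or.inl fun j => ?_
        simp only [hG]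
        by_cases h : j.rev ∈ S ∧ j ∉ S
        · rw [if_pos h]
        · rw [if_neg h, hrev]
      have hRsub : S ⊆ {i | rowC w G i} := by
        rw [hrow]
        intro i hi
        intro j
        simp only [hG]
        rw [if_neg]; tauto
      have hCsub : S ⊆ {i | colC w G i} := by
        rw [hcol]
        intro j hj
        intro i
        simp only [hG]
        by_cases h : j ∈ S ∧ i ∉ S
        · rw [if_pos h]
        · rw [if_neg h]
          have hiS : i ∈ S := by tauto
          have : w i = a := hiS
          have : w j = a := hj
          change w i = a at hiS
          change w j = a at hj
          rw [hj, hiS]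
      have hR : k ≤ {i | rowC w G i}.ncard := by
        rw [← ha]; exact Set.ncard_le_ncard hRsub (Set.toFinite _)
      have hC : k ≤ {i | colC w G i}.ncard := by
        rw [← ha]; exact Set.ncard_le_ncard hCsub (Set.toFinite _)
      have hmk : m = 2 * k := by omega
      unfold count
      rw [if_pos hd1, if_pos hd2]
      omega
  -- conclude
  have : IsGreatest {m' | ∃ G : Fin n → Fin n → α, count w G = m'} (m + 2) := by
    constructor
    · exact hex
    · rintro m' ⟨G, rfl⟩
      exact upper G
  rw [fword, this.csSup_eq]


end WordGrid
end

section
/- Let n ≥ 2, let A and M be two distinct letters, and let 1 ≤ k ≤ n/2. Let w = A^k M^{n-k} be the word of length n whose first k letters equal A and whose remaining n−k letters equal M. Then f(w) = max{2(n−k)+1, 4k}. -/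
namespace WordGrid

variable {α : Type*}

private lemma ncard_val_Ico {n : ℕ} (a b : ℕ) (hb : b ≤ n) :
    {i : Fin n | a ≤ (i : ℕ) ∧ (i : ℕ) < b}.ncard = b - a := by
  have h : Fin.val '' {i : Fin n | a ≤ (i : ℕ) ∧ (i : ℕ) < b} = ↑(Finset.Ico a b) := by
    ext x
    simp only [Set.mem_image, Set.mem_setOf_eq, Finset.coe_Ico, Set.mem_Ico]
    constructor
    · rintro ⟨i, ⟨h1, h2⟩, rfl⟩; exact ⟨h1, h2⟩
    · rintro ⟨h1, h2⟩; exact ⟨⟨x, lt_of_lt_of_le h2 hb⟩, ⟨h1, h2⟩, rfl⟩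
  rw [← Set.ncard_image_of_injective _ Fin.val_injective, h, Set.ncard_coe_finset, Nat.card_Ico]

private lemma zeta_unique {n : ℕ} (ζ : Bool → Fin n → Prop)
    (hdisj : ∀ d i, ζ d i → ζ (!d) i → False) {b : Bool} {i : Fin n} (hb : ζ b i) :
    ∀ b', ζ b' i ↔ b' = b := by
  intro b'
  constructor
  · intro hb'; by_contra hne
    have hbe : b' = !b := by revert hne; cases b' <;> cases b <;> decide
    exact hdisj b i hb (hbe ▸ hb')
  · rintro rfl; exact hb

open Classical in
private lemma abstract_bound {n k : ℕ} (hk : 1 ≤ k) (hkn : 2 * k ≤ n)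
    (R C : Bool → Set (Fin n)) (D Ad : Bool → Prop) (ζ : Bool → Fin n → Prop)
    (hcard1 : ∀ b, {i | ζ b i}.ncard ≤ k)
    (hcard2 : ∀ b, {i | ¬ ζ b i}.ncard ≤ n - k)
    (hcard3 : {i | ¬ ζ true i ∧ ¬ ζ false i}.ncard ≤ n - 2 * k)
    (hdisj : ∀ d i, ζ d i → ζ (!d) i → False)
    (hRC : ∀ d e i j, i ∈ R d → j ∈ C e → (ζ e i ↔ ζ d j))
    (hRD : ∀ d g i, i ∈ R d → D g → (ζ d i ↔ ζ g i))
    (hRA : ∀ d h i, i ∈ R d → Ad h → (ζ (!d) i ↔ ζ h i))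
    (hCD : ∀ e g j, j ∈ C e → D g → (ζ e j ↔ ζ g j))
    (hCA : ∀ e h j, j ∈ C e → Ad h → (ζ (!e) j ↔ ζ (!h) j))
    (hRd : Disjoint (R true) (R false)) (hCd : Disjoint (C true) (C false)) :
    (R true ∪ R false).ncard + (C true ∪ C false).ncard
      + (if D true ∨ D false then 1 else 0) + (if Ad true ∨ Ad false then 1 else 0)
      ≤ max (2 * (n - k) + 1) (4 * k) := by
  classical
  have hM1 : 2 * (n - k) + 1 ≤ max (2 * (n - k) + 1) (4 * k) := le_max_left _ _
  have hM2 : 4 * k ≤ max (2 * (n - k) + 1) (4 * k) := le_max_right _ _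
  have bsub : ∀ (S T : Set (Fin n)), S ⊆ T → S.ncard ≤ T.ncard := fun S T h =>
    Set.ncard_le_ncard h (Set.toFinite _)
  have bUniv : ∀ S : Set (Fin n), S.ncard ≤ n := by
    intro S
    calc S.ncard ≤ (Set.univ : Set (Fin n)).ncard := bsub _ _ (Set.subset_univ S)
    _ = n := by rw [Set.ncard_univ, Nat.card_eq_fintype_card, Fintype.card_fin]
  have hRsum' : ∀ d, (R true ∪ R false).ncard = (R d).ncard + (R (!d)).ncard := by
    intro d; cases d
    · rw [Set.union_comm]; exact Set.ncard_union_eq hRd.symm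
    · exact Set.ncard_union_eq hRd
  have hCsum' : ∀ e, (C true ∪ C false).ncard = (C e).ncard + (C (!e)).ncard := by
    intro e; cases e
    · rw [Set.union_comm]; exact Set.ncard_union_eq hCd.symm
    · exact Set.ncard_union_eq hCd
  have hd1 : (if D true ∨ D false then 1 else 0) ≤ 1 := by split <;> omega
  have hd2 : (if Ad true ∨ Ad false then 1 else 0) ≤ 1 := by split <;> omega
  have hmid : ∀ b (i : Fin n), ¬ ζ b i → ¬ ζ (!b) i → (¬ ζ true i ∧ ¬ ζ false i) := by
    intro b i h1 h2; cases b
    · exact ⟨h2, h1⟩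
    · exact ⟨h1, h2⟩
  by_cases hCne : (C true ∪ C false).Nonempty
  swap
  · have hc0 : (C true ∪ C false).ncard = 0 := by
      rw [Set.not_nonempty_iff_eq_empty.mp hCne, Set.ncard_empty]
    have := bUniv (R true ∪ R false)
    omega
  by_cases hRne : (R true ∪ R false).Nonempty
  swap
  · have hr0 : (R true ∪ R false).ncard = 0 := by
      rw [Set.not_nonempty_iff_eq_empty.mp hRne, Set.ncard_empty]
    have := bUniv (C true ∪ C false)
    omega
  obtain ⟨i₀', hi₀u⟩ := hRne
  obtain ⟨j₀', hj₀u⟩ := hCne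
  obtain ⟨dr, hdr⟩ : ∃ d, i₀' ∈ R d := by
    rcases hi₀u with h | h; exacts [⟨true, h⟩, ⟨false, h⟩]
  obtain ⟨er, her⟩ : ∃ e, j₀' ∈ C e := by
    rcases hj₀u with h | h; exacts [⟨true, h⟩, ⟨false, h⟩]
  by_cases hV : ∃ d e i j, i ∈ R d ∧ j ∈ C e ∧ ζ e i
  · -- Case I : some row/column pair "sees" an A
    obtain ⟨d₀, e₀, i₀, j₀, hi₀, hj₀, hζi⟩ := hV
    have hζj : ζ d₀ j₀ := (hRC _ _ _ _ hi₀ hj₀).mp hζi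
    have hbi : ∀ b, ζ b i₀ ↔ b = e₀ := zeta_unique ζ hdisj hζi
    have hbj : ∀ b, ζ b j₀ ↔ b = d₀ := zeta_unique ζ hdisj hζj
    have sR0 : R d₀ ⊆ {i | ζ e₀ i} := fun i hi => (hRC d₀ e₀ i j₀ hi hj₀).mpr hζj
    have sR1 : R (!d₀) ⊆ {i | ¬ ζ e₀ i} := fun i hi hh =>
      hdisj d₀ j₀ hζj ((hRC (!d₀) e₀ i j₀ hi hj₀).mp hh)
    have sC0 : C e₀ ⊆ {j | ζ d₀ j} := fun j hj => (hRC d₀ e₀ i₀ j hi₀ hj).mp hζi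
    have sC1 : C (!e₀) ⊆ {j | ¬ ζ d₀ j} := fun j hj hh =>
      hdisj e₀ i₀ hζi ((hRC d₀ (!e₀) i₀ j hi₀ hj).mpr hh)
    have hr0 : (R d₀).ncard ≤ k := le_trans (bsub _ _ sR0) (hcard1 e₀)
    have hc0 : (C e₀).ncard ≤ k := le_trans (bsub _ _ sC0) (hcard1 d₀)
    have hDg : ∀ g, D g → g = d₀ ∧ d₀ = e₀ := by
      intro g hg
      have h1 := hRD d₀ g i₀ hi₀ hg
      have h2 := hCD e₀ g j₀ hj₀ hg
      rw [hbi, hbi] at h1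
      rw [hbj, hbj] at h2
      revert h1 h2; cases d₀ <;> cases e₀ <;> cases g <;> decide
    have hAh : ∀ h, Ad h → h = e₀ ∧ e₀ = !d₀ := by
      intro h hh
      have h1 := hRA d₀ h i₀ hi₀ hh
      have h2 := hCA e₀ h j₀ hj₀ hh
      rw [hbi, hbi] at h1
      rw [hbj, hbj] at h2
      revert h1 h2; cases d₀ <;> cases e₀ <;> cases h <;> decide
    by_cases hD : D true ∨ D false
    · -- a main diagonal occurs
      obtain ⟨g, hg⟩ : ∃ g, D g := by rcases hD with h | h; exacts [⟨_, h⟩, ⟨_, h⟩]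
      obtain ⟨hgd, hde⟩ := hDg g hg
      have hA0 : ¬ (Ad true ∨ Ad false) := by
        have hcon : ∀ h, Ad h → False := by
          intro h hh
          have h2 := (hAh h hh).2
          rw [← hde] at h2
          revert h2; cases d₀ <;> decide
        rintro (h | h)
        · exact hcon _ h
        · exact hcon _ h
      subst hgd
      have sR1' : R (!g) ⊆ {i | ¬ ζ true i ∧ ¬ ζ false i} := by
        intro i hi
        have h1 := hRD (!g) g i hi hg
        exact hmid g i (fun hc => hdisj g i hc (h1.mpr hc)) (fun hc => hdisj g i (h1.mp hc) hc)
      have sC1' : C (!e₀) ⊆ {j | ¬ ζ true j ∧ ¬ ζ false j} := by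
        intro j hj
        have h1 := hCD (!e₀) g j hj hg
        rw [hde] at h1
        exact hmid e₀ j (fun hc => hdisj e₀ j hc (h1.mpr hc)) (fun hc => hdisj e₀ j (h1.mp hc) hc)
      have hr1 : (R (!g)).ncard ≤ n - 2 * k := le_trans (bsub _ _ sR1') hcard3
      have hc1 : (C (!e₀)).ncard ≤ n - 2 * k := le_trans (bsub _ _ sC1') hcard3
      rw [hRsum' g, hCsum' e₀, if_neg hA0]
      omega
    · by_cases hA : Ad true ∨ Ad false
      · obtain ⟨h, ha⟩ : ∃ h, Ad h := by rcases hA with h | h; exacts [⟨_, h⟩, ⟨_, h⟩]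
        obtain ⟨hhe, hed⟩ := hAh h ha
        subst hhe
        have sR1' : R (!d₀) ⊆ {i | ¬ ζ true i ∧ ¬ ζ false i} := by
          intro i hi
          have h1 := hRA (!d₀) h i hi ha
          rw [Bool.not_not, hed] at h1
          exact hmid d₀ i (fun hc => hdisj d₀ i hc (h1.mp hc)) (fun hc => hdisj d₀ i (h1.mpr hc) hc)
        have sC1' : C (!h) ⊆ {j | ¬ ζ true j ∧ ¬ ζ false j} := by
          intro j hj
          have h1 := hCA (!h) h j hj ha
          rw [Bool.not_not] at h1
          exact hmid h j (fun hc => hdisj h j hc (h1.mp hc)) (fun hc => hdisj h j (h1.mpr hc) hc)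
        have hr1 : (R (!d₀)).ncard ≤ n - 2 * k := le_trans (bsub _ _ sR1') hcard3
        have hc1 : (C (!h)).ncard ≤ n - 2 * k := le_trans (bsub _ _ sC1') hcard3
        rw [hRsum' d₀, hCsum' h, if_neg hD]
        omega
      · rw [hRsum' d₀, hCsum' e₀, if_neg hD, if_neg hA]
        by_cases hR1 : (R (!d₀)).Nonempty
        · by_cases hC1 : (C (!e₀)).Nonempty
          · obtain ⟨i₁, hi₁⟩ := hR1
            obtain ⟨j₁, hj₁⟩ := hC1
            by_cases hv : ζ (!e₀) i₁
            · have hvj : ζ (!d₀) j₁ := (hRC _ _ _ _ hi₁ hj₁).mp hv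
              have s1 : R (!d₀) ⊆ {i | ζ (!e₀) i} := fun i hi =>
                (hRC _ _ i j₁ hi hj₁).mpr hvj
              have s2 : C (!e₀) ⊆ {j | ζ (!d₀) j} := fun j hj =>
                (hRC _ _ i₁ j hi₁ hj).mp hv
              have b1 : (R (!d₀)).ncard ≤ k := le_trans (bsub _ _ s1) (hcard1 _)
              have b2 : (C (!e₀)).ncard ≤ k := le_trans (bsub _ _ s2) (hcard1 _)
              omega
            · have hvj : ¬ ζ (!d₀) j₁ := fun hc => hv ((hRC _ _ _ _ hi₁ hj₁).mpr hc)
              have s1 : R (!d₀) ⊆ {i | ¬ ζ true i ∧ ¬ ζ false i} := by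
                intro i hi
                exact hmid e₀ i (sR1 hi) (fun hc => hvj ((hRC _ _ i j₁ hi hj₁).mp hc))
              have s2 : C (!e₀) ⊆ {j | ¬ ζ true j ∧ ¬ ζ false j} := by
                intro j hj
                exact hmid d₀ j (sC1 hj) (fun hc => hv ((hRC _ _ i₁ j hi₁ hj).mpr hc))
              have b1 : (R (!d₀)).ncard ≤ n - 2 * k := le_trans (bsub _ _ s1) hcard3
              have b2 : (C (!e₀)).ncard ≤ n - 2 * k := le_trans (bsub _ _ s2) hcard3
              omega
          · have hc0' : (C (!e₀)).ncard = 0 := by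
              rw [Set.not_nonempty_iff_eq_empty.mp hC1, Set.ncard_empty]
            have b1 : (R (!d₀)).ncard ≤ n - k := le_trans (bsub _ _ sR1) (hcard2 _)
            omega
        · have hr0' : (R (!d₀)).ncard = 0 := by
            rw [Set.not_nonempty_iff_eq_empty.mp hR1, Set.ncard_empty]
          have b1 : (C (!e₀)).ncard ≤ n - k := le_trans (bsub _ _ sC1) (hcard2 _)
          omega
  · -- Case II : every row/column pair "sees" M
    push_neg at hV
    have sR : (R true ∪ R false) ⊆ {i | ¬ ζ er i} := by
      rintro i (h | h)
      · exact hV true er i j₀' h her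
      · exact hV false er i j₀' h her
    have sC : (C true ∪ C false) ⊆ {j | ¬ ζ dr j} := by
      rintro j (h | h)
      · exact fun hc => hV dr true i₀' j hdr h ((hRC dr true i₀' j hdr h).mpr hc)
      · exact fun hc => hV dr false i₀' j hdr h ((hRC dr false i₀' j hdr h).mpr hc)
    have br : (R true ∪ R false).ncard ≤ n - k := le_trans (bsub _ _ sR) (hcard2 _)
    have bc : (C true ∪ C false).ncard ≤ n - k := le_trans (bsub _ _ sC) (hcard2 _)
    by_cases hDD : (D true ∨ D false) ∧ (Ad true ∨ Ad false)
    · obtain ⟨g, hg⟩ : ∃ g, D g := by rcases hDD.1 with h | h; exacts [⟨_, h⟩, ⟨_, h⟩]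
      obtain ⟨h, ha⟩ : ∃ h, Ad h := by rcases hDD.2 with h | h; exacts [⟨_, h⟩, ⟨_, h⟩]
      by_cases hrm : (R true ∪ R false) ⊆ {i | ¬ ζ true i ∧ ¬ ζ false i}
      · have br2 : (R true ∪ R false).ncard ≤ n - 2 * k := le_trans (bsub _ _ hrm) hcard3
        omega
      · obtain ⟨i₂, hi₂u, hi₂m⟩ := Set.not_subset.mp hrm
        obtain ⟨b, hb⟩ : ∃ b, ζ b i₂ := by
          by_contra hc; push_neg at hc; exact hi₂m ⟨hc true, hc false⟩
        obtain ⟨d₂, hd₂⟩ : ∃ d, i₂ ∈ R d := by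
          rcases hi₂u with h' | h'; exacts [⟨_, h'⟩, ⟨_, h'⟩]
        have hbi : ∀ b', ζ b' i₂ ↔ b' = b := zeta_unique ζ hdisj hb
        have h1 := hRD d₂ g i₂ hd₂ hg
        have h2 := hRA d₂ h i₂ hd₂ ha
        rw [hbi, hbi] at h1
        rw [hbi, hbi] at h2
        have hgh : g = !h := by revert h1 h2; cases d₂ <;> cases b <;> cases g <;> cases h <;> decide
        subst hgh
        have sCM : (C true ∪ C false) ⊆ {j | ¬ ζ true j ∧ ¬ ζ false j} := by
          intro j hju
          obtain ⟨e, he⟩ : ∃ e, j ∈ C e := by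
            rcases hju with h' | h'; exacts [⟨_, h'⟩, ⟨_, h'⟩]
          by_contra hjm
          obtain ⟨b', hb'⟩ : ∃ b', ζ b' j := by
            by_contra hc; push_neg at hc; exact hjm ⟨hc true, hc false⟩
          have hbj : ∀ b'', ζ b'' j ↔ b'' = b' := zeta_unique ζ hdisj hb'
          have h3 := hCD e (!h) j he hg
          have h4 := hCA e h j he ha
          rw [hbj, hbj] at h3
          rw [hbj, hbj] at h4
          revert h3 h4; cases e <;> cases b' <;> cases h <;> decide
        have bc2 : (C true ∪ C false).ncard ≤ n - 2 * k := le_trans (bsub _ _ sCM) hcard3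
        omega
    · have hle : (if D true ∨ D false then 1 else 0) + (if Ad true ∨ Ad false then 1 else 0) ≤ 1 := by
        by_cases h1 : D true ∨ D false
        · have h2 : ¬ (Ad true ∨ Ad false) := fun h => hDD ⟨h1, h⟩
          rw [if_pos h1, if_neg h2]
        · rw [if_neg h1]; omega
      omega


private lemma ite_one_zero_irrel (p : Prop) {h1 h2 : Decidable p} :
    (@ite ℕ p h1 1 0) = @ite ℕ p h2 1 0 := by
  rw [Subsingleton.elim h1 h2]

private def dd {n : ℕ} (b : Bool) (x : Fin n) : Fin n := if b then x else x.rev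

@[simp] private lemma dd_true {n : ℕ} (x : Fin n) : dd true x = x := rfl
@[simp] private lemma dd_false {n : ℕ} (x : Fin n) : dd false x = x.rev := rfl

private lemma dd_rev {n : ℕ} (b : Bool) (x : Fin n) : dd b x.rev = dd (!b) x := by
  cases b <;> simp [Fin.rev_rev]

private lemma count_le_s5 {n k : ℕ} (hk : 1 ≤ k) (hkn : 2 * k ≤ n)
    (A M : α) (hAM : A ≠ M) (w : Fin n → α)
    (hw : ∀ i : Fin n, w i = if (i : ℕ) < k then A else M)
    (G : Fin n → Fin n → α) :
    count w G ≤ max (2 * (n - k) + 1) (4 * k) := by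
  classical
  have hn : 2 ≤ n := by omega
  have hww : ∀ x y : Fin n, w x = w y → ((x : ℕ) < k ↔ (y : ℕ) < k) := by
    intro x y hxy
    rw [hw, hw] at hxy
    constructor
    · intro h1; by_contra h2; rw [if_pos h1, if_neg h2] at hxy; exact hAM hxy
    · intro h2; by_contra h1; rw [if_neg h1, if_pos h2] at hxy; exact hAM hxy.symm
  have key := abstract_bound hk hkn
    (fun d => {i | ∀ x, G i x = w (dd d x)})
    (fun e => {j | ∀ x, G x j = w (dd e x)})
    (fun g => ∀ x, G x x = w (dd g x))
    (fun h => ∀ x : Fin n, G x x.rev = w (dd h x))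
    (fun b i => ((dd b i : Fin n) : ℕ) < k)
    ?_ ?_ ?_ ?_ ?_ ?_ ?_ ?_ ?_ ?_ ?_
  · -- convert count
    have hrow : {i | rowC w G i}
        = {i | ∀ x, G i x = w (dd true x)} ∪ {i | ∀ x, G i x = w (dd false x)} := by
      ext i; simp [rowC, Set.mem_union, Set.mem_setOf_eq]
    have hcol : {i | colC w G i}
        = {j | ∀ x, G x j = w (dd true x)} ∪ {j | ∀ x, G x j = w (dd false x)} := by
      ext i; simp [colC, Set.mem_union, Set.mem_setOf_eq]
    have hdiag : diagC w G ↔ ((∀ x, G x x = w (dd true x)) ∨ (∀ x, G x x = w (dd false x))) := by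
      simp [diagC]
    have hadiag : adiagC w G ↔
        ((∀ x : Fin n, G x x.rev = w (dd true x)) ∨ (∀ x : Fin n, G x x.rev = w (dd false x))) := by
      simp [adiagC]
    unfold count
    rw [hrow, hcol, if_congr hdiag rfl rfl, if_congr hadiag rfl rfl]
    convert key using 2
    · congr 1
      exact ite_one_zero_irrel _
    · exact ite_one_zero_irrel _
  · -- hcard1
    intro b
    cases b
    · have he : {i : Fin n | ((dd false i : Fin n) : ℕ) < k}
          = {i : Fin n | n - k ≤ (i : ℕ) ∧ (i : ℕ) < n} := by
        ext i
        have := i.isLt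
        simp only [dd_false, Set.mem_setOf_eq, Fin.val_rev]
        omega
      rw [he]
      have hcc := ncard_val_Ico (n := n) (n - k) n le_rfl
      omega
    · have he : {i : Fin n | ((dd true i : Fin n) : ℕ) < k}
          = {i : Fin n | 0 ≤ (i : ℕ) ∧ (i : ℕ) < k} := by
        ext i; simp
      rw [he]
      have hcc := ncard_val_Ico (n := n) 0 k (by omega)
      omega
  · -- hcard2
    intro b
    cases b
    · have he : {i : Fin n | ¬ ((dd false i : Fin n) : ℕ) < k}
          = {i : Fin n | 0 ≤ (i : ℕ) ∧ (i : ℕ) < n - k} := by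
        ext i
        have := i.isLt
        simp only [dd_false, Set.mem_setOf_eq, Fin.val_rev]
        omega
      rw [he]
      have hcc := ncard_val_Ico (n := n) 0 (n - k) (by omega)
      omega
    · have he : {i : Fin n | ¬ ((dd true i : Fin n) : ℕ) < k}
          = {i : Fin n | k ≤ (i : ℕ) ∧ (i : ℕ) < n} := by
        ext i
        have := i.isLt
        simp only [dd_true, Set.mem_setOf_eq]
        omega
      rw [he]
      have hcc := ncard_val_Ico (n := n) k n le_rfl
      omega
  · -- hcard3
    have he : {i : Fin n | ¬ ((dd true i : Fin n) : ℕ) < k ∧ ¬ ((dd false i : Fin n) : ℕ) < k}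
        = {i : Fin n | k ≤ (i : ℕ) ∧ (i : ℕ) < n - k} := by
      ext i
      have := i.isLt
      simp only [dd_true, dd_false, Set.mem_setOf_eq, Fin.val_rev]
      omega
    rw [he]
    have hcc := ncard_val_Ico (n := n) k (n - k) (by omega)
    omega
  · -- hdisj
    intro d i h1 h2
    cases d
    · simp only [dd_false, Fin.val_rev] at h1
      simp only [Bool.not_false, dd_true] at h2
      have := i.isLt
      omega
    · simp only [dd_true] at h1
      simp only [Bool.not_true, dd_false, Fin.val_rev] at h2
      have := i.isLt
      omega
  · -- hRC
    intro d e i j hi hj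
    exact hww _ _ ((hj i).symm.trans (hi j))
  · -- hRD
    intro d g i hi hg
    exact hww _ _ ((hi i).symm.trans (hg i))
  · -- hRA
    intro d h i hi ha
    have h1 : G i i.rev = w (dd (!d) i) := by rw [hi i.rev, dd_rev]
    exact hww _ _ (h1.symm.trans (ha i))
  · -- hCD
    intro e g j hj hg
    exact hww _ _ ((hj j).symm.trans (hg j))
  · -- hCA
    intro e h j hj ha
    have h1 : G j.rev j = w (dd (!e) j) := by rw [hj j.rev, dd_rev]
    have h2 : G j.rev j = w (dd (!h) j) := by
      have := ha j.rev
      rw [Fin.rev_rev, dd_rev] at this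
      exact this
    exact hww _ _ (h1.symm.trans h2)
  · -- hRd
    rw [Set.disjoint_left]
    intro i h1 h2
    have e1 := h1 ⟨0, by omega⟩
    have e2 := h2 ⟨0, by omega⟩
    have := hww _ _ (e1.symm.trans e2)
    simp only [dd_true, dd_false, Fin.val_rev] at this
    omega
  · -- hCd
    rw [Set.disjoint_left]
    intro j h1 h2
    have e1 := h1 ⟨0, by omega⟩
    have e2 := h2 ⟨0, by omega⟩
    have := hww _ _ (e1.symm.trans e2)
    simp only [dd_true, dd_false, Fin.val_rev] at this
    omega


private lemma exists_G1 {n k : ℕ} (hk : 1 ≤ k) (hkn : 2 * k ≤ n)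
    (A M : α) (hAM : A ≠ M) (w : Fin n → α)
    (hw : ∀ i : Fin n, w i = if (i : ℕ) < k then A else M) :
    ∃ G : Fin n → Fin n → α, count w G = 2 * (n - k) + 1 := by
  classical
  have hn : 2 ≤ n := by omega
  set G : Fin n → Fin n → α := fun i j =>
    if (i : ℕ) < k ∧ (j : ℕ) < k then (if i = j then A else M)
    else if ((i : ℕ) < k ∨ (j : ℕ) < k) then A else M with hG
  refine ⟨G, ?_⟩
  have hGA : ∀ i j : Fin n,
      (((i : ℕ) < k ∧ (j : ℕ) < k ∧ i = j) ∨ ((i : ℕ) < k ∧ ¬ (j : ℕ) < k)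
        ∨ (¬ (i : ℕ) < k ∧ (j : ℕ) < k)) → G i j = A := by
    intro i j hc
    simp only [hG]
    rcases hc with ⟨h1, h2, h3⟩ | ⟨h1, h2⟩ | ⟨h1, h2⟩
    · rw [if_pos ⟨h1, h2⟩, if_pos h3]
    · rw [if_neg (by tauto), if_pos (Or.inl h1)]
    · rw [if_neg (by tauto), if_pos (Or.inr h2)]
  have hGM : ∀ i j : Fin n,
      (((i : ℕ) < k ∧ (j : ℕ) < k ∧ i ≠ j) ∨ (¬ (i : ℕ) < k ∧ ¬ (j : ℕ) < k)) → G i j = M := by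
    intro i j hc
    simp only [hG]
    rcases hc with ⟨h1, h2, h3⟩ | ⟨h1, h2⟩
    · rw [if_pos ⟨h1, h2⟩, if_neg h3]
    · rw [if_neg (by tauto), if_neg (by tauto)]
  set x0 : Fin n := ⟨0, by omega⟩ with hx0d
  set x1 : Fin n := ⟨k, by omega⟩ with hx1d
  set xn : Fin n := ⟨n - 1, by omega⟩ with hxnd
  have hv0 : (x0 : ℕ) = 0 := rfl
  have hv1 : (x1 : ℕ) = k := rfl
  have hvn : (xn : ℕ) = n - 1 := rfl
  have hrow : {i | rowC w G i} = {i : Fin n | k ≤ (i : ℕ) ∧ (i : ℕ) < n} := by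
    ext i
    simp only [Set.mem_setOf_eq]
    constructor
    · intro h
      refine ⟨?_, i.isLt⟩
      by_contra hik
      push_neg at hik
      rcases h with h | h
      · have hthis := h x1
        rw [hGA i x1 (Or.inr (Or.inl ⟨hik, by rw [hv1]; omega⟩)), hw, hv1,
          if_neg (by omega)] at hthis
        exact hAM hthis
      · have hthis := h i
        rw [hGA i i (Or.inl ⟨hik, hik, rfl⟩), hw, Fin.val_rev,
          if_neg (by have := i.isLt; omega)] at hthis
        exact hAM hthis
    · rintro ⟨h1, _⟩
      left
      intro j
      rw [hw]
      by_cases hj : (j : ℕ) < k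
      · rw [if_pos hj]; exact hGA i j (Or.inr (Or.inr ⟨by omega, hj⟩))
      · rw [if_neg hj]; exact hGM i j (Or.inr ⟨by omega, hj⟩)
  have hcol : {i | colC w G i} = {i : Fin n | k ≤ (i : ℕ) ∧ (i : ℕ) < n} := by
    ext i
    simp only [Set.mem_setOf_eq]
    constructor
    · intro h
      refine ⟨?_, i.isLt⟩
      by_contra hik
      push_neg at hik
      rcases h with h | h
      · have hthis := h x1
        rw [hGA x1 i (Or.inr (Or.inr ⟨by rw [hv1]; omega, hik⟩)), hw, hv1,
          if_neg (by omega)] at hthis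
        exact hAM hthis
      · have hthis := h i
        rw [hGA i i (Or.inl ⟨hik, hik, rfl⟩), hw, Fin.val_rev,
          if_neg (by have := i.isLt; omega)] at hthis
        exact hAM hthis
    · rintro ⟨h1, _⟩
      left
      intro j
      rw [hw]
      by_cases hj : (j : ℕ) < k
      · rw [if_pos hj]; exact hGA j i (Or.inr (Or.inl ⟨hj, by omega⟩))
      · rw [if_neg hj]; exact hGM j i (Or.inr ⟨hj, by omega⟩)
  have hdiagp : diagC w G := by
    left
    intro j
    rw [hw]
    by_cases hj : (j : ℕ) < k
    · rw [if_pos hj]; exact hGA j j (Or.inl ⟨hj, hj, rfl⟩)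
    · rw [if_neg hj]; exact hGM j j (Or.inr ⟨hj, hj⟩)
  have hadiagn : ¬ adiagC w G := by
    rintro (h | h)
    · have hthis := h xn
      rw [hGA xn xn.rev (Or.inr (Or.inr ⟨by rw [hvn]; omega,
        by rw [Fin.val_rev, hvn]; omega⟩)), hw, hvn, if_neg (by omega)] at hthis
      exact hAM hthis
    · have hthis := h x0
      rw [hGA x0 x0.rev (Or.inr (Or.inl ⟨by rw [hv0]; omega,
        by rw [Fin.val_rev, hv0]; omega⟩)), hw, Fin.val_rev, hv0,
        if_neg (by omega)] at hthis
      exact hAM hthis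
  unfold count
  rw [hrow, hcol, if_pos hdiagp, if_neg hadiagn, ncard_val_Ico k n le_rfl]
  omega

private lemma exists_G2 {n k : ℕ} (hk : 1 ≤ k) (hkn : 2 * k ≤ n)
    (A M : α) (hAM : A ≠ M) (w : Fin n → α)
    (hw : ∀ i : Fin n, w i = if (i : ℕ) < k then A else M) :
    ∃ G : Fin n → Fin n → α, count w G = 4 * k := by
  classical
  have hn : 2 ≤ n := by omega
  set G : Fin n → Fin n → α := fun i j =>
    if ((i : ℕ) < k ∧ (j : ℕ) < k) ∨ (n - k ≤ (i : ℕ) ∧ n - k ≤ (j : ℕ)) then A else M with hG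
  refine ⟨G, ?_⟩
  have hGA : ∀ i j : Fin n,
      (((i : ℕ) < k ∧ (j : ℕ) < k) ∨ (n - k ≤ (i : ℕ) ∧ n - k ≤ (j : ℕ))) → G i j = A := by
    intro i j hc
    simp only [hG]
    rw [if_pos hc]
  have hGM : ∀ i j : Fin n,
      ¬ (((i : ℕ) < k ∧ (j : ℕ) < k) ∨ (n - k ≤ (i : ℕ) ∧ n - k ≤ (j : ℕ))) → G i j = M := by
    intro i j hc
    simp only [hG]
    rw [if_neg hc]
  set x0 : Fin n := ⟨0, by omega⟩ with hx0d
  set xn : Fin n := ⟨n - 1, by omega⟩ with hxnd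
  have hv0 : (x0 : ℕ) = 0 := rfl
  have hvn : (xn : ℕ) = n - 1 := rfl
  have hS : ({i : Fin n | 0 ≤ (i : ℕ) ∧ (i : ℕ) < k}
      ∪ {i : Fin n | n - k ≤ (i : ℕ) ∧ (i : ℕ) < n}).ncard = 2 * k := by
    rw [Set.ncard_union_eq (by
        rw [Set.disjoint_left]
        rintro i ⟨_, h2⟩ ⟨h3, _⟩
        omega) (Set.toFinite _) (Set.toFinite _),
      ncard_val_Ico 0 k (by omega), ncard_val_Ico (n - k) n le_rfl]
    omega
  have hrow : {i | rowC w G i} = {i : Fin n | 0 ≤ (i : ℕ) ∧ (i : ℕ) < k}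
      ∪ {i : Fin n | n - k ≤ (i : ℕ) ∧ (i : ℕ) < n} := by
    ext i
    simp only [Set.mem_setOf_eq, Set.mem_union]
    constructor
    · intro h
      by_contra hmidc
      have hm1 : ¬ (i : ℕ) < k := fun hc => hmidc (Or.inl ⟨Nat.zero_le _, hc⟩)
      have hm2 : ¬ n - k ≤ (i : ℕ) := fun hc => hmidc (Or.inr ⟨hc, i.isLt⟩)
      rcases h with h | h
      · have hthis := h x0
        rw [hGM i x0 (by rw [hv0]; omega), hw, hv0, if_pos (by omega)] at hthis
        exact hAM hthis.symm
      · have hthis := h xn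
        rw [hGM i xn (by rw [hvn]; omega), hw, Fin.val_rev, hvn,
          if_pos (by omega)] at hthis
        exact hAM hthis.symm
    · rintro (⟨_, h1⟩ | ⟨h1, _⟩)
      · left
        intro j
        rw [hw]
        by_cases hj : (j : ℕ) < k
        · rw [if_pos hj]; exact hGA i j (Or.inl ⟨h1, hj⟩)
        · rw [if_neg hj]; exact hGM i j (by omega)
      · right
        intro j
        rw [hw, Fin.val_rev]
        by_cases hj : n - k ≤ (j : ℕ)
        · rw [if_pos (by have := j.isLt; omega)]; exact hGA i j (Or.inr ⟨h1, hj⟩)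
        · rw [if_neg (by have := j.isLt; omega)]; exact hGM i j (by omega)
  have hcol : {i | colC w G i} = {i : Fin n | 0 ≤ (i : ℕ) ∧ (i : ℕ) < k}
      ∪ {i : Fin n | n - k ≤ (i : ℕ) ∧ (i : ℕ) < n} := by
    ext i
    simp only [Set.mem_setOf_eq, Set.mem_union]
    constructor
    · intro h
      by_contra hmidc
      have hm1 : ¬ (i : ℕ) < k := fun hc => hmidc (Or.inl ⟨Nat.zero_le _, hc⟩)
      have hm2 : ¬ n - k ≤ (i : ℕ) := fun hc => hmidc (Or.inr ⟨hc, i.isLt⟩)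
      rcases h with h | h
      · have hthis := h x0
        rw [hGM x0 i (by rw [hv0]; omega), hw, hv0, if_pos (by omega)] at hthis
        exact hAM hthis.symm
      · have hthis := h xn
        rw [hGM xn i (by rw [hvn]; omega), hw, Fin.val_rev, hvn,
          if_pos (by omega)] at hthis
        exact hAM hthis.symm
    · rintro (⟨_, h1⟩ | ⟨h1, _⟩)
      · left
        intro j
        rw [hw]
        by_cases hj : (j : ℕ) < k
        · rw [if_pos hj]; exact hGA j i (Or.inl ⟨hj, h1⟩)
        · rw [if_neg hj]; exact hGM j i (by omega)
      · right
        intro j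
        rw [hw, Fin.val_rev]
        by_cases hj : n - k ≤ (j : ℕ)
        · rw [if_pos (by have := j.isLt; omega)]; exact hGA j i (Or.inr ⟨hj, h1⟩)
        · rw [if_neg (by have := j.isLt; omega)]; exact hGM j i (by omega)
  have hdiagn : ¬ diagC w G := by
    rintro (h | h)
    · have hthis := h xn
      rw [hGA xn xn (Or.inr ⟨by rw [hvn]; omega, by rw [hvn]; omega⟩), hw, hvn,
        if_neg (by omega)] at hthis
      exact hAM hthis
    · have hthis := h x0
      rw [hGA x0 x0 (Or.inl ⟨by rw [hv0]; omega, by rw [hv0]; omega⟩), hw, Fin.val_rev, hv0,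
        if_neg (by omega)] at hthis
      exact hAM hthis
  have hadiagn : ¬ adiagC w G := by
    rintro (h | h)
    · have hthis := h x0
      rw [hGM x0 x0.rev (by rw [Fin.val_rev, hv0]; omega), hw, hv0,
        if_pos (by omega)] at hthis
      exact hAM hthis.symm
    · have hthis := h xn
      rw [hGM xn xn.rev (by rw [Fin.val_rev, hvn]; omega), hw, Fin.val_rev, hvn,
        if_pos (by omega)] at hthis
      exact hAM hthis.symm
  unfold count
  rw [hrow, hcol, if_neg hdiagn, if_neg hadiagn, hS]
  omega


theorem fword_AkMnk {n k : ℕ} (hn : 2 ≤ n) (hk : 1 ≤ k) (hkn : 2 * k ≤ n)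
    (A M : α) (hAM : A ≠ M)
    (w : Fin n → α) (hw : ∀ i : Fin n, w i = if (i : ℕ) < k then A else M) :
    fword w = max (2 * (n - k) + 1) (4 * k) := by
  classical
  have hub : ∀ m ∈ {m | ∃ G : Fin n → Fin n → α, count w G = m},
      m ≤ max (2 * (n - k) + 1) (4 * k) := by
    rintro m ⟨G, rfl⟩
    exact count_le_s5 hk hkn A M hAM w hw G
  have hmem : max (2 * (n - k) + 1) (4 * k)
      ∈ {m | ∃ G : Fin n → Fin n → α, count w G = m} := by
    rcases le_total (4 * k) (2 * (n - k) + 1) with h | h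
    · rw [max_eq_left h]
      exact exists_G1 hk hkn A M hAM w hw
    · rw [max_eq_right h]
      exact exists_G2 hk hkn A M hAM w hw
  exact IsGreatest.csSup_eq ⟨hmem, hub⟩

end WordGrid
end

section
/- Let n ≥ 2 and let w be a word of length n with w_i = w_{n-i+1} for all i (a palindrome). Then f(w,d) is asymptotic to (1/2)(n+2)^d as d → ∞, i.e., the limit as d → ∞ of f(w,d)/(n+2)^d equals 1/2. -/
namespace WordGridHD

variable {α : Type*}

/-- `(p; v)` is the canonical pair of a line in the grid `[n]^d`: all entries of `v` lie in
`{-1, 0, +1}`, the first nonzero entry of `v` is `+1`, and all the points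
`p, p + v, …, p + (n-1)v` have all coordinates in `[n] = {1, …, n}`. -/
def IsCanonLine (n d : ℕ) (p v : Fin d → ℤ) : Prop :=
  (∀ j, v j = -1 ∨ v j = 0 ∨ v j = 1) ∧
  (∃ j, v j = 1 ∧ ∀ j' < j, v j' = 0) ∧
  (∀ i : ℕ, i < n → ∀ j, 1 ≤ p j + i * v j ∧ p j + i * v j ≤ n)

/-- The line with canonical pair `(p; v)` contains the word `w` (forwards or backwards)
in the grid `G`. -/
def lineC {n d : ℕ} (w : Fin n → α) (G : (Fin d → ℤ) → α) (p v : Fin d → ℤ) : Prop :=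
  (∀ i : Fin n, G (fun j => p j + (i : ℕ) * v j) = w i) ∨
  (∀ i : Fin n, G (fun j => p j + (i : ℕ) * v j) = w i.rev)

/-- `f(w,G)`: the number of lines of `[n]^d` containing `w` in the grid `G`. -/
noncomputable def count {n : ℕ} (d : ℕ) (w : Fin n → α) (G : (Fin d → ℤ) → α) : ℕ :=
  {pv : (Fin d → ℤ) × (Fin d → ℤ) |
    IsCanonLine n d pv.1 pv.2 ∧ lineC w G pv.1 pv.2}.ncard

/-- `f(w,d)`: the maximum of `f(w,G)` over all `(n,d)`-grids `G`. -/
noncomputable def fword {n : ℕ} (w : Fin n → α) (d : ℕ) : ℕ :=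
  sSup {m | ∃ G : (Fin d → ℤ) → α, count d w G = m}

open Finset

abbrev Coord (n : ℕ) := Fin n ⊕ Bool

variable {n d : ℕ}

/-- interpretation of a coordinate descriptor as (p_j, v_j) -/
def pvOf (n : ℕ) : Coord n → ℤ × ℤ
  | .inl c => ((c : ℤ) + 1, 0)
  | .inr true => (1, 1)
  | .inr false => ((n : ℤ), -1)

def pOf (ω : Fin d → Coord n) : Fin d → ℤ := fun j => (pvOf n (ω j)).1
def vOf (ω : Fin d → Coord n) : Fin d → ℤ := fun j => (pvOf n (ω j)).2

def Canon (ω : Fin d → Coord n) : Prop :=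
  ∃ j, ω j = .inr true ∧ ∀ k, k < j → (ω k).isLeft

def AntiCanon (ω : Fin d → Coord n) : Prop :=
  ∃ j, ω j = .inr false ∧ ∀ k, k < j → (ω k).isLeft

def AllL (ω : Fin d → Coord n) : Prop := ∀ j, (ω j).isLeft

def eMap (ω : Fin d → Coord n) : (Fin d → ℤ) × (Fin d → ℤ) := (pOf ω, vOf ω)

lemma eMap_injective : Function.Injective (eMap (n := n) (d := d)) := by
  intro ω ω' h
  have hp : ∀ j, pOf ω j = pOf ω' j := fun j => congrFun (congrArg Prod.fst h) j
  have hv : ∀ j, vOf ω j = vOf ω' j := fun j => congrFun (congrArg Prod.snd h) j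
  funext j
  have hpj := hp j; have hvj := hv j
  rcases hc : ω j with c | b <;> rcases hc' : ω' j with c' | b' <;>
    simp [pOf, vOf, pvOf, hc, hc'] at hpj hvj <;> try rfl
  · exact congrArg Sum.inl (Fin.ext (by exact_mod_cast hpj))
  · rcases b' with _ | _ <;> simp [pvOf] at hvj
  · rcases b with _ | _ <;> simp [pvOf] at hvj
  · rcases b with _ | _ <;> rcases b' with _ | _ <;> simp [pvOf] at hvj <;> rfl

lemma isCanonLine_of_canon (hn : 1 ≤ n) (ω : Fin d → Coord n) (hC : Canon ω) :
    IsCanonLine n d (pOf ω) (vOf ω) := by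
  refine ⟨fun j => ?_, ?_, fun i hi j => ?_⟩
  · rcases hc : ω j with c | b
    · simp [vOf, pvOf, hc]
    · rcases b with _ | _ <;> simp [vOf, pvOf, hc]
  · obtain ⟨j, hj, hlt⟩ := hC
    refine ⟨j, by simp [vOf, pvOf, hj], fun k hk => ?_⟩
    have := hlt k hk
    rcases hc : ω k with c | b
    · simp [vOf, pvOf, hc]
    · simp [hc] at this
  · have hi2 : (i : ℤ) < (n : ℤ) := by exact_mod_cast hi
    have hi3 : (i : ℤ) ≤ (n : ℤ) - 1 := by omega
    have hi0 : (0 : ℤ) ≤ (i : ℤ) := Int.ofNat_nonneg i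
    rcases hc : ω j with c | b
    · have hcn : (c : ℤ) < (n : ℤ) := by exact_mod_cast c.isLt
      simp only [pOf, vOf, pvOf, hc]
      constructor <;> omega
    · rcases b with _ | _ <;> simp only [pOf, vOf, pvOf, hc] <;> constructor <;> omega

lemma canon_of_isCanonLine (hn : 1 ≤ n) (p v : Fin d → ℤ) (h : IsCanonLine n d p v) :
    ∃ ω : Fin d → Coord n, Canon ω ∧ eMap ω = (p, v) := by
  obtain ⟨h1, h2, h3⟩ := h
  have hone : ∀ j, 1 ≤ p j + 0 * v j ∧ p j + 0 * v j ≤ n := h3 0 (by omega)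
  have hlast : ∀ j, 1 ≤ p j + (n - 1 : ℕ) * v j ∧ p j + (n - 1 : ℕ) * v j ≤ n :=
    h3 (n - 1) (by omega)
  have hcast : ((n - 1 : ℕ) : ℤ) = (n : ℤ) - 1 := by omega
  refine ⟨fun j => if v j = 1 then .inr true else if v j = -1 then .inr false
    else .inl ⟨(p j - 1).toNat % n, Nat.mod_lt _ (by omega)⟩, ?_, ?_⟩
  · obtain ⟨j, hj1, hj0⟩ := h2
    refine ⟨j, by simp [hj1], fun k hk => ?_⟩
    have h0 := hj0 k hk
    simp [h0]
  · have key : ∀ j, (pvOf n (if v j = 1 then (.inr true : Coord n) else if v j = -1 then .inr false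
        else .inl ⟨(p j - 1).toNat % n, Nat.mod_lt _ (by omega)⟩)) = (p j, v j) := by
      intro j
      have hj0 := hone j; have hjl := hlast j
      rcases h1 j with hv | hv | hv
      · have : p j = n := by rw [hv] at hj0 hjl; omega
        simp [pvOf, hv, this]
      · have hrange : 1 ≤ p j ∧ p j ≤ n := by rw [hv] at hj0; simpa using hj0
        have hmod : (p j - 1).toNat % n = (p j - 1).toNat := Nat.mod_eq_of_lt (by omega)
        simp only [hv, pvOf]
        rw [if_neg (by norm_num), if_neg (by norm_num)]
        simp only [pvOf, Prod.mk.injEq]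
        constructor
        · push_cast [hmod]; omega
        · trivial
      · have : p j = 1 := by rw [hv] at hj0 hjl; omega
        simp [pvOf, hv, this]
    refine Prod.ext ?_ ?_ <;> funext j
    · exact congrArg Prod.fst (key j)
    · exact congrArg Prod.snd (key j)

open Classical in
lemma trichotomy (ω : Fin d → Coord n) : AllL ω ∨ Canon ω ∨ AntiCanon ω := by
  by_cases h : AllL ω
  · exact Or.inl h
  · right
    have : ∃ j, ¬ (ω j).isLeft := by
      by_contra hc; push_neg at hc; exact h fun j => by simpa using hc j
    obtain ⟨j0, hj0⟩ := this
    set S : Finset (Fin d) := univ.filter (fun j => ¬ (ω j).isLeft) with hS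
    have hSne : S.Nonempty := ⟨j0, by simp only [hS, mem_filter, mem_univ, true_and]; exact hj0⟩
    set m := S.min' hSne with hm
    have hmS : m ∈ S := S.min'_mem hSne
    have hmin : ∀ k, k < m → (ω k).isLeft := by
      intro k hk
      by_contra hkL
      have : m ≤ k := S.min'_le k (by simp only [hS, mem_filter, mem_univ, true_and]; exact hkL)
      omega
    have hmR : ¬ (ω m).isLeft := by simpa [hS] using hmS
    rcases hc : ω m with c | b
    · simp [hc] at hmR
    · rcases b with _ | _
      · exact Or.inr ⟨m, hc, hmin⟩
      · exact Or.inl ⟨m, hc, hmin⟩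

lemma not_canon_antiCanon {ω : Fin d → Coord n} (h1 : Canon ω) (h2 : AntiCanon ω) : False := by
  obtain ⟨j, hj, hjl⟩ := h1
  obtain ⟨k, hk, hkl⟩ := h2
  rcases lt_trichotomy j k with h | h | h
  · have := hkl j h; simp [hj] at this
  · rw [h] at hj; rw [hj] at hk; simp at hk
  · have := hjl k h; simp [hk] at this

lemma not_canon_allL {ω : Fin d → Coord n} (h1 : Canon ω) (h2 : AllL ω) : False := by
  obtain ⟨j, hj, -⟩ := h1; have := h2 j; simp [hj] at this

lemma not_antiCanon_allL {ω : Fin d → Coord n} (h1 : AntiCanon ω) (h2 : AllL ω) : False := by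
  obtain ⟨j, hj, -⟩ := h1; have := h2 j; simp [hj] at this

open Classical in
noncomputable def canonF (n d : ℕ) : Finset (Fin d → Coord n) := univ.filter Canon

open Classical in
lemma card_allL : (univ.filter (AllL (n := n) (d := d))).card = n ^ d := by
  classical
  have himg : univ.filter (AllL (n := n) (d := d)) =
      Finset.image (fun f : Fin d → Fin n => fun j => (Sum.inl (f j) : Coord n)) univ := by
    ext ω
    simp only [mem_filter, mem_univ, true_and, Finset.mem_image]
    constructor
    · intro h
      have : ∀ j, ∃ c : Fin n, ω j = Sum.inl c := by
        intro j
        rcases hc : ω j with c | b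
        · exact ⟨c, rfl⟩
        · have := h j; simp [hc] at this
      choose f hf using this
      exact ⟨f, funext fun j => (hf j).symm⟩
    · rintro ⟨f, -, rfl⟩
      intro j; simp [AllL]
  rw [himg, Finset.card_image_of_injective]
  · simp [Fintype.card_fun]
  · intro f g h
    funext j
    have := congrFun h j
    simpa using this

open Classical in
lemma card_canon_eq_antiCanon :
    (univ.filter (Canon (n := n) (d := d))).card = (univ.filter (AntiCanon (n := n) (d := d))).card := by
  classical
  have flipC : Coord n → Coord n := Sum.map id not
  refine Finset.card_bij' (fun ω _ => fun j => Sum.map id not (ω j))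
    (fun ω _ => fun j => Sum.map id not (ω j)) ?_ ?_ ?_ ?_
  · intro ω hω
    simp only [mem_filter, mem_univ, true_and] at hω ⊢
    obtain ⟨j, hj, hjl⟩ := hω
    refine ⟨j, by simp [hj], fun k hk => ?_⟩
    have := hjl k hk
    rcases hc : ω k with c | b
    · simp [hc]
    · simp [hc] at this
  · intro ω hω
    simp only [mem_filter, mem_univ, true_and] at hω ⊢
    obtain ⟨j, hj, hjl⟩ := hω
    refine ⟨j, by simp [hj], fun k hk => ?_⟩
    have := hjl k hk
    rcases hc : ω k with c | b
    · simp [hc]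
    · simp [hc] at this
  · intro ω _
    funext j
    rcases hc : ω j with c | b <;> simp [hc]
  · intro ω _
    funext j
    rcases hc : ω j with c | b <;> simp [hc]

open Classical in
lemma two_card_canon :
    2 * (univ.filter (Canon (n := n) (d := d))).card + n ^ d = (n + 2) ^ d := by
  classical
  have htot : (univ : Finset (Fin d → Coord n)).card = (n + 2) ^ d := by
    simp only [Finset.card_univ, Fintype.card_fun]
    rw [Fintype.card_fin]
    congr 1
    simp [Coord]
  have hsplit := Finset.card_filter_add_card_filter_not
    (s := (univ : Finset (Fin d → Coord n))) (Canon)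
  have hneg : (univ.filter (fun ω => ¬ Canon (n := n) (d := d) ω)) =
      (univ.filter (AntiCanon (n := n) (d := d))) ∪ (univ.filter (AllL (n := n) (d := d))) := by
    ext ω
    simp only [mem_filter, mem_univ, true_and, Finset.mem_union]
    constructor
    · intro h
      rcases trichotomy ω with h1 | h1 | h1
      · exact Or.inr h1
      · exact absurd h1 h
      · exact Or.inl h1
    · rintro (h | h)
      · exact fun hc => not_canon_antiCanon hc h
      · exact fun hc => not_canon_allL hc h
  have hdisj : Disjoint (univ.filter (AntiCanon (n := n) (d := d)))
      (univ.filter (AllL (n := n) (d := d))) := by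
    rw [Finset.disjoint_left]
    intro ω h1 h2
    simp only [mem_filter, mem_univ, true_and] at h1 h2
    exact not_antiCanon_allL h1 h2
  rw [hneg, Finset.card_union_of_disjoint hdisj, card_allL, ← card_canon_eq_antiCanon] at hsplit
  omega

open Classical in
noncomputable def Mov (ω : Fin d → Coord n) : ℕ :=
  (univ.filter fun j => (ω j).isRight).card

open Classical in
noncomputable def Acl (ω : Fin d → Coord n) (t : Fin n) : ℕ :=
  (univ.filter fun j => ∃ c, ω j = Sum.inl c ∧ (c = t ∨ c = t.rev)).card

def Good (ω : Fin d → Coord n) : Prop :=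
  ∀ s t : Fin n, s ≠ t → s ≠ t.rev → Acl ω s < Acl ω t + Mov ω

lemma cls_disjoint {s t c : Fin n} (hst : s ≠ t) (hst' : s ≠ t.rev)
    (h1 : c = s ∨ c = s.rev) (h2 : c = t ∨ c = t.rev) : False := by
  rcases h1 with rfl | rfl
  · rcases h2 with rfl | h
    · exact hst rfl
    · exact hst' h
  · rcases h2 with h | h
    · exact hst' (by rw [← h, Fin.rev_rev])
    · exact hst (Fin.rev_injective h)

/-- weight exponent for the Chernoff-type count -/
def eW (s t : Fin n) : Coord n → ℕ
  | .inl c => if c = s ∨ c = s.rev then 0 else if c = t ∨ c = t.rev then 2 else 1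
  | .inr _ => 2

open Classical in
lemma eW_pointwise {s t : Fin n} (hst : s ≠ t) (hst' : s ≠ t.rev) (x : Coord n) :
    eW s t x + (if (∃ c, x = Sum.inl c ∧ (c = s ∨ c = s.rev)) then 1 else 0) =
      1 + (if (∃ c, x = Sum.inl c ∧ (c = t ∨ c = t.rev)) then 1 else 0) +
        (if x.isRight then 1 else 0) := by
  rcases x with c | b
  · have hs : (∃ c', (Sum.inl c : Coord n) = Sum.inl c' ∧ (c' = s ∨ c' = s.rev))
        ↔ (c = s ∨ c = s.rev) := by simp
    have ht : (∃ c', (Sum.inl c : Coord n) = Sum.inl c' ∧ (c' = t ∨ c' = t.rev))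
        ↔ (c = t ∨ c = t.rev) := by simp
    simp only [hs, ht, eW, Sum.isRight_inl]
    by_cases h1 : c = s ∨ c = s.rev
    · have h2 : ¬(c = t ∨ c = t.rev) := fun h2 => cls_disjoint hst hst' h1 h2
      simp [h1, h2]
    · by_cases h2 : c = t ∨ c = t.rev <;> simp [h1, h2]
  · simp [eW]

open Classical in
lemma eW_sum {s t : Fin n} (hst : s ≠ t) (hst' : s ≠ t.rev) (ω : Fin d → Coord n) :
    (∑ j, eW s t (ω j)) + Acl ω s = d + Acl ω t + Mov ω := by
  have hA : Acl ω s = ∑ j, (if (∃ c, ω j = Sum.inl c ∧ (c = s ∨ c = s.rev)) then 1 else 0) := by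
    rw [Acl, Finset.card_filter]
  have hB : Acl ω t = ∑ j, (if (∃ c, ω j = Sum.inl c ∧ (c = t ∨ c = t.rev)) then 1 else 0) := by
    rw [Acl, Finset.card_filter]
  have hM : Mov ω = ∑ j : Fin d, (if (ω j).isRight then 1 else 0) := by
    rw [Mov, Finset.card_filter]
  rw [hA, hB, hM, ← Finset.sum_add_distrib]
  have hpt : ∀ j ∈ (univ : Finset (Fin d)),
      eW s t (ω j) + (if (∃ c, ω j = Sum.inl c ∧ (c = s ∨ c = s.rev)) then 1 else 0)
      = 1 + (if (∃ c, ω j = Sum.inl c ∧ (c = t ∨ c = t.rev)) then 1 else 0) +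
        (if (ω j).isRight then 1 else 0) := fun j _ => eW_pointwise hst hst' (ω j)
  rw [Finset.sum_congr rfl hpt, Finset.sum_add_distrib, Finset.sum_add_distrib,
    Finset.sum_const, Finset.card_univ, Fintype.card_fin, smul_eq_mul, mul_one]
  try omega

open Classical in
lemma sum_wt_le {s t : Fin n} (hst : s ≠ t) (hst' : s ≠ t.rev) :
    ∑ c : Coord n, (4/5 : ℝ) ^ eW s t c ≤ (4/5) * ((n : ℝ) + 19/10) := by
  rw [Fintype.sum_sum_type]
  have hBool : ∑ b : Bool, (4/5 : ℝ) ^ eW s t (Sum.inr b) = 2 * (4/5)^2 := by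
    rw [Fintype.sum_bool]
    norm_num [eW]
  have hsplit1 := Finset.sum_filter_add_sum_filter_not (univ : Finset (Fin n))
    (fun c => c = s ∨ c = s.rev) (fun c => (4/5 : ℝ) ^ eW s t (Sum.inl c))
  have hsplit2 := Finset.sum_filter_add_sum_filter_not
    (univ.filter fun c => ¬ (c = s ∨ c = s.rev)) (fun c => c = t ∨ c = t.rev)
    (fun c => (4/5 : ℝ) ^ eW s t (Sum.inl c))
  have hval1 : ∑ c ∈ univ.filter (fun c => c = s ∨ c = s.rev),
      (4/5 : ℝ) ^ eW s t (Sum.inl c)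
      = (univ.filter (fun c : Fin n => c = s ∨ c = s.rev)).card := by
    have h : ∀ c ∈ univ.filter (fun c : Fin n => c = s ∨ c = s.rev),
        (4/5 : ℝ) ^ eW s t (Sum.inl c) = 1 := by
      intro c hc
      simp only [Finset.mem_filter, mem_univ, true_and] at hc
      simp [eW, hc]
    rw [Finset.sum_congr rfl h, Finset.sum_const, nsmul_eq_mul, mul_one]
  have hval2 : ∑ c ∈ (univ.filter fun c : Fin n => ¬ (c = s ∨ c = s.rev)).filter
      (fun c => c = t ∨ c = t.rev), (4/5 : ℝ) ^ eW s t (Sum.inl c)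
      = ((univ.filter fun c : Fin n => ¬ (c = s ∨ c = s.rev)).filter
        (fun c => c = t ∨ c = t.rev)).card * (4/5 : ℝ)^2 := by
    have h : ∀ c ∈ (univ.filter fun c : Fin n => ¬ (c = s ∨ c = s.rev)).filter
        (fun c => c = t ∨ c = t.rev), (4/5 : ℝ) ^ eW s t (Sum.inl c) = (4/5:ℝ)^2 := by
      intro c hc
      simp only [Finset.mem_filter, mem_univ, true_and] at hc
      simp [eW, hc.1, hc.2]
    rw [Finset.sum_congr rfl h, Finset.sum_const, nsmul_eq_mul]
  have hval3 : ∑ c ∈ (univ.filter fun c : Fin n => ¬ (c = s ∨ c = s.rev)).filter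
      (fun c => ¬ (c = t ∨ c = t.rev)), (4/5 : ℝ) ^ eW s t (Sum.inl c)
      = ((univ.filter fun c : Fin n => ¬ (c = s ∨ c = s.rev)).filter
        (fun c => ¬ (c = t ∨ c = t.rev))).card * (4/5 : ℝ) := by
    have h : ∀ c ∈ (univ.filter fun c : Fin n => ¬ (c = s ∨ c = s.rev)).filter
        (fun c => ¬ (c = t ∨ c = t.rev)), (4/5 : ℝ) ^ eW s t (Sum.inl c) = (4/5:ℝ) := by
      intro c hc
      simp only [Finset.mem_filter, mem_univ, true_and] at hc
      simp [eW, hc.1, hc.2]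
    rw [Finset.sum_congr rfl h, Finset.sum_const, nsmul_eq_mul]
  set a := (univ.filter (fun c : Fin n => c = s ∨ c = s.rev)).card with ha
  set b := ((univ.filter fun c : Fin n => ¬ (c = s ∨ c = s.rev)).filter
    (fun c => c = t ∨ c = t.rev)).card with hb
  set k := ((univ.filter fun c : Fin n => ¬ (c = s ∨ c = s.rev)).filter
    (fun c => ¬ (c = t ∨ c = t.rev))).card with hk
  have habk : a + (b + k) = n := by
    have h2 : b + k = (univ.filter fun c : Fin n => ¬ (c = s ∨ c = s.rev)).card := by
      rw [hb, hk]
      exact Finset.card_filter_add_card_filter_not _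
    have h1 : a + (univ.filter fun c : Fin n => ¬ (c = s ∨ c = s.rev)).card = n := by
      rw [ha]
      have := Finset.card_filter_add_card_filter_not
        (s := (univ : Finset (Fin n))) (fun c : Fin n => c = s ∨ c = s.rev)
      simpa using this
    omega
  have hale : a ≤ 2 := by
    have hsub : univ.filter (fun c : Fin n => c = s ∨ c = s.rev)
        ⊆ ({s, s.rev} : Finset (Fin n)) := by
      intro c hc
      simp only [Finset.mem_filter, mem_univ, true_and] at hc
      simpa [Finset.mem_insert] using hc
    calc a ≤ ({s, s.rev} : Finset (Fin n)).card := Finset.card_le_card hsub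
    _ ≤ 2 := (Finset.card_insert_le _ _).trans (by simp)
  have hble : 1 ≤ b := by
    have hmem : t ∈ (univ.filter fun c : Fin n => ¬ (c = s ∨ c = s.rev)).filter
        (fun c => c = t ∨ c = t.rev) := by
      refine Finset.mem_filter.mpr ⟨Finset.mem_filter.mpr ⟨mem_univ t, ?_⟩, Or.inl rfl⟩
      rintro (h | h)
      · exact hst h.symm
      · exact hst' (by rw [h, Fin.rev_rev])
    rw [hb]
    exact Finset.card_pos.mpr ⟨t, hmem⟩
  rw [← hsplit1, ← hsplit2, hval1, hval2, hval3, hBool]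
  have hcast : (a : ℝ) + ((b : ℝ) + (k : ℝ)) = (n : ℝ) := by exact_mod_cast habk
  have hca : (a : ℝ) ≤ 2 := by exact_mod_cast hale
  have hcb : (1 : ℝ) ≤ (b : ℝ) := by exact_mod_cast hble
  nlinarith [hcast, hca, hcb]

open Classical in
lemma card_badst {s t : Fin n} (hst : s ≠ t) (hst' : s ≠ t.rev) :
    ((univ.filter fun ω : Fin d → Coord n => Acl ω t + Mov ω ≤ Acl ω s).card : ℝ)
      ≤ ((n : ℝ) + 19/10) ^ d := by
  set r : ℝ := 4/5 with hr
  have hr0 : (0:ℝ) < r := by norm_num [hr]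
  have hr1 : r ≤ 1 := by norm_num [hr]
  set B := univ.filter fun ω : Fin d → Coord n => Acl ω t + Mov ω ≤ Acl ω s with hB
  have step1 : (B.card : ℝ) * r ^ d ≤ ∑ ω ∈ B, r ^ (∑ j, eW s t (ω j)) := by
    have hle : ∀ ω ∈ B, r ^ d ≤ r ^ (∑ j, eW s t (ω j)) := by
      intro ω hω
      simp only [hB, Finset.mem_filter, mem_univ, true_and] at hω
      have hs := eW_sum hst hst' ω
      exact pow_le_pow_of_le_one hr0.le hr1 (by omega)
    calc (B.card : ℝ) * r ^ d = ∑ _ω ∈ B, r ^ d := by rw [Finset.sum_const, nsmul_eq_mul]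
    _ ≤ _ := Finset.sum_le_sum hle
  have step2 : ∑ ω ∈ B, r ^ (∑ j, eW s t (ω j))
      ≤ ∑ ω : Fin d → Coord n, r ^ (∑ j, eW s t (ω j)) :=
    Finset.sum_le_sum_of_subset_of_nonneg (Finset.filter_subset _ _)
      (fun ω _ _ => by positivity)
  have step3 : ∑ ω : Fin d → Coord n, r ^ (∑ j, eW s t (ω j))
      = (∑ c : Coord n, r ^ eW s t c) ^ d := by
    have hh : ∀ ω ∈ (univ : Finset (Fin d → Coord n)),
        r ^ (∑ j, eW s t (ω j)) = ∏ j, r ^ eW s t (ω j) := by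
      intro ω _; rw [Finset.prod_pow_eq_pow_sum]
    rw [Finset.sum_congr rfl hh, ← Fintype.piFinset_univ,
      ← Finset.prod_univ_sum (fun _ => univ) (fun (_ : Fin d) (c : Coord n) => r ^ eW s t c)]
    simp
  have step4 : (∑ c : Coord n, r ^ eW s t c) ^ d ≤ (r * ((n:ℝ) + 19/10)) ^ d := by
    apply pow_le_pow_left₀ (by positivity)
    exact sum_wt_le hst hst'
  have chain : (B.card : ℝ) * r ^ d ≤ ((n:ℝ) + 19/10) ^ d * r ^ d := by
    calc (B.card : ℝ) * r ^ d ≤ ∑ ω ∈ B, r ^ (∑ j, eW s t (ω j)) := step1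
    _ ≤ ∑ ω : Fin d → Coord n, r ^ (∑ j, eW s t (ω j)) := step2
    _ = (∑ c : Coord n, r ^ eW s t c) ^ d := step3
    _ ≤ (r * ((n:ℝ) + 19/10)) ^ d := step4
    _ = ((n:ℝ) + 19/10) ^ d * r ^ d := by rw [mul_pow]; ring
  exact le_of_mul_le_mul_right chain (by positivity)

open Classical in
lemma card_bad_le :
    ((univ.filter fun ω : Fin d → Coord n => ¬ Good ω).card : ℝ)
      ≤ (n : ℝ)^2 * ((n : ℝ) + 19/10) ^ d := by
  set pairs : Finset (Fin n × Fin n) :=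
    univ.filter (fun q => q.1 ≠ q.2 ∧ q.1 ≠ q.2.rev) with hpairs
  have hsub : (univ.filter fun ω : Fin d → Coord n => ¬ Good ω)
      ⊆ pairs.biUnion (fun q =>
          univ.filter fun ω : Fin d → Coord n => Acl ω q.2 + Mov ω ≤ Acl ω q.1) := by
    intro ω hω
    replace hω : ¬ Good ω := (Finset.mem_filter.mp hω).2; simp only [Good] at hω
    push_neg at hω
    obtain ⟨s, t, hst, hst', hle⟩ := hω
    rw [Finset.mem_biUnion]
    exact ⟨(s, t), by simp [hpairs, hst, hst'], by simp [hle]⟩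
  have h1 : ((univ.filter fun ω : Fin d → Coord n => ¬ Good ω).card : ℝ)
      ≤ ∑ q ∈ pairs, (((univ.filter fun ω : Fin d → Coord n =>
          Acl ω q.2 + Mov ω ≤ Acl ω q.1).card : ℝ)) := by
    have := (Finset.card_le_card hsub).trans (Finset.card_biUnion_le)
    exact_mod_cast this
  have h2 : ∑ q ∈ pairs, (((univ.filter fun ω : Fin d → Coord n =>
      Acl ω q.2 + Mov ω ≤ Acl ω q.1).card : ℝ))
      ≤ ∑ _q ∈ pairs, ((n : ℝ) + 19/10) ^ d := by
    apply Finset.sum_le_sum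
    intro q hq
    simp only [hpairs, Finset.mem_filter, mem_univ, true_and] at hq
    exact card_badst hq.1 hq.2
  have h3 : ∑ _q ∈ pairs, ((n : ℝ) + 19/10) ^ d ≤ (n : ℝ)^2 * ((n : ℝ) + 19/10) ^ d := by
    rw [Finset.sum_const, nsmul_eq_mul]
    have hcard : (pairs.card : ℝ) ≤ (n : ℝ)^2 := by
      have : pairs.card ≤ n * n := by
        calc pairs.card ≤ (univ : Finset (Fin n × Fin n)).card :=
          Finset.card_le_card (Finset.filter_subset _ _)
        _ = n * n := by simp
      calc (pairs.card : ℝ) ≤ ((n * n : ℕ) : ℝ) := by exact_mod_cast this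
      _ = (n:ℝ)^2 := by push_cast; ring
    apply mul_le_mul_of_nonneg_right hcard (by positivity)
  linarith

open Classical in
noncomputable def score (x : Fin d → Fin n) (t : Fin n) : ℕ :=
  (univ.filter fun j => x j = t ∨ x j = t.rev).card

lemma exists_gmax (hn : 0 < n) (x : Fin d → Fin n) : ∃ t, ∀ s, score x s ≤ score x t := by
  obtain ⟨t, -, ht⟩ := Finset.exists_max_image (univ : Finset (Fin n)) (score x)
    ⟨⟨0, hn⟩, mem_univ _⟩
  exact ⟨t, fun s => ht s (mem_univ s)⟩

noncomputable def gsel (hn : 0 < n) (x : Fin d → Fin n) : Fin n :=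
  (exists_gmax hn x).choose

lemma gsel_max (hn : 0 < n) (x : Fin d → Fin n) (s : Fin n) :
    score x s ≤ score x (gsel hn x) :=
  (exists_gmax hn x).choose_spec s

noncomputable def gridG (hn : 0 < n) (w : Fin n → α) : (Fin d → ℤ) → α := fun y =>
  if h : ∀ j, ∃ c : Fin n, y j = (c : ℕ) + 1 then w (gsel hn (fun j => (h j).choose))
  else w ⟨0, hn⟩

lemma gridG_eval (hn : 0 < n) (w : Fin n → α) (x : Fin d → Fin n) :
    gridG hn w (fun j => ((x j : ℕ) : ℤ) + 1) = w (gsel hn x) := by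
  have h : ∀ j, ∃ c : Fin n, ((x j : ℕ) : ℤ) + 1 = (c : ℕ) + 1 := fun j => ⟨x j, rfl⟩
  simp only [gridG, dif_pos h]
  congr 1
  apply congrArg
  funext j
  have hspec := (h j).choose_spec
  have : ((x j : ℕ) : ℤ) = (((h j).choose : ℕ) : ℤ) := by omega
  have hval : (x j : ℕ) = ((h j).choose : ℕ) := by exact_mod_cast this
  exact (Fin.ext hval).symm

/-- the grid point of line `ω` at position `i`, as an element of `[n]^d` (0-based). -/
def ptF (ω : Fin d → Coord n) (i : Fin n) : Fin d → Fin n := fun j =>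
  match ω j with
  | .inl c => c
  | .inr true => i
  | .inr false => i.rev

lemma pt_eq (ω : Fin d → Coord n) (i : Fin n) :
    (fun j => pOf ω j + (i : ℕ) * vOf ω j) = fun j => ((ptF ω i j : ℕ) : ℤ) + 1 := by
  funext j
  have hin : (i : ℕ) < n := i.isLt
  rcases hc : ω j with c | b
  · simp [pOf, vOf, pvOf, ptF, hc]
  · rcases b with _ | _
    · have hrev : (Fin.rev i : ℕ) = n - ((i : ℕ) + 1) := Fin.val_rev i
      simp only [pOf, vOf, pvOf, ptF, hc]
      rw [hrev]
      have : ((n - ((i : ℕ) + 1) : ℕ) : ℤ) = (n : ℤ) - (i : ℕ) - 1 := by omega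
      rw [this]; ring
    · simp only [pOf, vOf, pvOf, ptF, hc]
      ring

open Classical in
lemma score_pt (ω : Fin d → Coord n) (i t : Fin n) :
    score (ptF ω i) t = Acl ω t + (if t = i ∨ t = i.rev then Mov ω else 0) := by
  have key : ∀ j : Fin d, (if (ptF ω i j = t ∨ ptF ω i j = t.rev) then 1 else 0) =
      (if (∃ c, ω j = Sum.inl c ∧ (c = t ∨ c = t.rev)) then 1 else 0)
      + (if ((t = i ∨ t = i.rev) ∧ (ω j).isRight) then 1 else 0) := by
    intro j
    rcases hc : ω j with c | b
    · simp [ptF, hc]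
    · rcases b with _ | _
      · -- moving with sign -1 : value i.rev
        have hiff : (i.rev = t ∨ i.rev = t.rev) ↔ (t = i ∨ t = i.rev) := by
          constructor
          · rintro (h | h)
            · exact Or.inr h.symm
            · exact Or.inl (Fin.rev_injective h).symm
          · rintro (h | h)
            · exact Or.inr (congrArg Fin.rev h.symm)
            · exact Or.inl h.symm
        simp only [ptF, hc, Sum.isRight_inr, and_true]
        rw [if_congr hiff rfl rfl]
        have hex : ¬ (∃ c, (Sum.inr false : Coord n) = Sum.inl c ∧ (c = t ∨ c = t.rev)) := by
          rintro ⟨c, hcc, -⟩; exact Sum.inr_ne_inl hcc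
        rw [if_neg hex, zero_add]
      · have hiff : (i = t ∨ i = t.rev) ↔ (t = i ∨ t = i.rev) := by
          constructor
          · rintro (h | h)
            · exact Or.inl h.symm
            · exact Or.inr (by rw [h, Fin.rev_rev])
          · rintro (h | h)
            · exact Or.inl h.symm
            · exact Or.inr (by rw [h, Fin.rev_rev])
        simp only [ptF, hc, Sum.isRight_inr, and_true]
        rw [if_congr hiff rfl rfl]
        have hex : ¬ (∃ c, (Sum.inr true : Coord n) = Sum.inl c ∧ (c = t ∨ c = t.rev)) := by
          rintro ⟨c, hcc, -⟩; exact Sum.inr_ne_inl hcc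
        rw [if_neg hex, zero_add]
  rw [score, Acl, Finset.card_filter, Finset.card_filter,
    Finset.sum_congr rfl (fun j _ => key j), Finset.sum_add_distrib]
  congr 1
  by_cases hti : t = i ∨ t = i.rev
  · rw [if_pos hti, Mov, Finset.card_filter]
    apply Finset.sum_congr rfl
    intro j _
    rw [if_congr (iff_of_true hti trivial |> fun _ => Iff.rfl) rfl rfl]
    simp [hti]
  · rw [if_neg hti]
    apply Finset.sum_eq_zero
    intro j _
    simp [hti]

lemma gsel_mem (hn : 0 < n) (ω : Fin d → Coord n) (hG : Good ω) (i : Fin n) :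
    gsel hn (ptF ω i) = i ∨ gsel hn (ptF ω i) = i.rev := by
  by_contra hcon
  push_neg at hcon
  obtain ⟨h1, h2⟩ := hcon
  have hA : Acl ω (gsel hn (ptF ω i)) < Acl ω i + Mov ω := hG _ i h1 h2
  have hs1 : score (ptF ω i) (gsel hn (ptF ω i)) = Acl ω (gsel hn (ptF ω i)) := by
    rw [score_pt, if_neg (by tauto), add_zero]
  have hs2 : score (ptF ω i) i = Acl ω i + Mov ω := by
    rw [score_pt, if_pos (Or.inl rfl)]
  have := gsel_max hn (ptF ω i) i
  rw [hs1, hs2] at this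
  omega

open Classical in
lemma setS_subset (w : Fin n → α) (G : (Fin d → ℤ) → α) (hn : 1 ≤ n) :
    {pv : (Fin d → ℤ) × (Fin d → ℤ) | IsCanonLine n d pv.1 pv.2 ∧ lineC w G pv.1 pv.2}
      ⊆ eMap (n := n) (d := d) '' ↑(univ.filter (Canon (n := n) (d := d))) := by
  rintro ⟨p, v⟩ ⟨h1, -⟩
  obtain ⟨ω, hC, hE⟩ := canon_of_isCanonLine hn p v h1
  exact ⟨ω, by simp [hC], hE⟩

open Classical in
lemma setS_finite (w : Fin n → α) (G : (Fin d → ℤ) → α) (hn : 1 ≤ n) :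
    {pv : (Fin d → ℤ) × (Fin d → ℤ) | IsCanonLine n d pv.1 pv.2 ∧ lineC w G pv.1 pv.2}.Finite :=
  Set.Finite.subset ((univ.filter (Canon (n := n) (d := d))).finite_toSet.image eMap)
    (setS_subset w G hn)

open Classical in
lemma count_le_canon (w : Fin n → α) (G : (Fin d → ℤ) → α) (hn : 1 ≤ n) :
    count d w G ≤ (univ.filter (Canon (n := n) (d := d))).card := by
  have h1 : count d w G ≤ (eMap (n := n) (d := d) '' ↑(univ.filter (Canon (n := n) (d := d)))).ncard :=
    Set.ncard_le_ncard (setS_subset w G hn)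
      ((univ.filter (Canon (n := n) (d := d))).finite_toSet.image eMap)
  rwa [Set.ncard_image_of_injective _ eMap_injective, Set.ncard_coe_finset] at h1

open Classical in
lemma count_ge_good (hn : 0 < n) (w : Fin n → α) (hpal : ∀ i, w i = w i.rev) :
    (univ.filter fun ω : Fin d → Coord n => Canon ω ∧ Good ω).card
      ≤ count d w (gridG hn w) := by
  have hsub : eMap (n := n) (d := d) '' ↑(univ.filter fun ω : Fin d → Coord n => Canon ω ∧ Good ω)
      ⊆ {pv : (Fin d → ℤ) × (Fin d → ℤ) |
          IsCanonLine n d pv.1 pv.2 ∧ lineC w (gridG hn w) pv.1 pv.2} := by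
    rintro _ ⟨ω, hω, rfl⟩
    simp only [Finset.coe_filter, Set.mem_setOf_eq, mem_univ, true_and] at hω
    obtain ⟨hC, hG⟩ := hω
    refine ⟨isCanonLine_of_canon hn ω hC, Or.inl fun i => ?_⟩
    have hpt : (fun j => (eMap ω).1 j + (i : ℕ) * (eMap ω).2 j)
        = fun j => ((ptF ω i j : ℕ) : ℤ) + 1 := pt_eq ω i
    rw [hpt, gridG_eval]
    rcases gsel_mem hn ω hG i with h | h
    · rw [h]
    · rw [h]; exact (hpal i).symm
  calc (univ.filter fun ω : Fin d → Coord n => Canon ω ∧ Good ω).card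
      = (eMap (n := n) (d := d) '' ↑(univ.filter fun ω : Fin d → Coord n => Canon ω ∧ Good ω)).ncard := by
        rw [Set.ncard_image_of_injective _ eMap_injective, Set.ncard_coe_finset]
  _ ≤ _ := Set.ncard_le_ncard hsub (setS_finite w (gridG hn w) hn)

open Classical in
lemma fword_bddAbove (hn : 1 ≤ n) (w : Fin n → α) :
    ∀ m ∈ {m | ∃ G : (Fin d → ℤ) → α, count d w G = m},
      m ≤ (univ.filter (Canon (n := n) (d := d))).card := by
  rintro m ⟨G, rfl⟩
  exact count_le_canon w G hn

open Classical in
lemma fword_le (hn : 1 ≤ n) (w : Fin n → α) :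
    fword w d ≤ (univ.filter (Canon (n := n) (d := d))).card := by
  apply csSup_le
  · exact ⟨count d w (fun _ => w ⟨0, hn⟩), ⟨fun _ => w ⟨0, hn⟩, rfl⟩⟩
  · exact fword_bddAbove hn w

open Classical in
lemma fword_ge (hn : 0 < n) (w : Fin n → α) (hpal : ∀ i, w i = w i.rev) :
    (univ.filter fun ω : Fin d → Coord n => Canon ω ∧ Good ω).card ≤ fword w d := by
  refine le_trans (count_ge_good hn w hpal) (le_csSup ?_ ⟨gridG hn w, rfl⟩)
  exact ⟨(univ.filter (Canon (n := n) (d := d))).card, fword_bddAbove hn w⟩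

open Classical in
lemma card_canon_le_good_add_bad :
    (univ.filter (Canon (n := n) (d := d))).card
      ≤ (univ.filter fun ω : Fin d → Coord n => Canon ω ∧ Good ω).card
        + (univ.filter fun ω : Fin d → Coord n => ¬ Good ω).card := by
  have hsub : univ.filter (Canon (n := n) (d := d))
      ⊆ (univ.filter fun ω : Fin d → Coord n => Canon ω ∧ Good ω)
        ∪ (univ.filter fun ω : Fin d → Coord n => ¬ Good ω) := by
    intro ω hω
    simp only [Finset.mem_filter, mem_univ, true_and] at hω
    by_cases hG : Good ω
    · exact Finset.mem_union_left _ (by simp [hω, hG])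
    · exact Finset.mem_union_right _ (by simp [hG])
  exact (Finset.card_le_card hsub).trans (Finset.card_union_le _ _)
open Filter in
theorem palindrome_asymptotics {n : ℕ} (hn : 2 ≤ n) (w : Fin n → α)
    (hpal : ∀ i, w i = w i.rev) :
    Tendsto (fun d : ℕ => (fword w d : ℝ) / (n + 2) ^ d) atTop (nhds (1 / 2)) := by
  classical
  have hn0 : 0 < n := by omega
  have hn1 : 1 ≤ n := by omega
  set lo : ℕ → ℝ := fun d =>
    (((n : ℝ) + 2) ^ d / 2 - (n : ℝ) ^ d / 2 - (n : ℝ) ^ 2 * ((n : ℝ) + 19/10) ^ d)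
      / ((n : ℝ) + 2) ^ d with hlo
  have hpos : ∀ d : ℕ, (0 : ℝ) < ((n : ℝ) + 2) ^ d := fun d => by positivity
  have hcast : ∀ d : ℕ, 2 * (((univ.filter (Canon (n := n) (d := d))).card : ℝ)) + (n : ℝ) ^ d
      = ((n : ℝ) + 2) ^ d := by
    intro d
    have h := two_card_canon (n := n) (d := d)
    have h2 : ((2 * (univ.filter (Canon (n := n) (d := d))).card + n ^ d : ℕ) : ℝ)
        = (((n + 2) ^ d : ℕ) : ℝ) := by rw [h]
    push_cast at h2
    linarith [h2]
  have hub : ∀ d : ℕ, (fword w d : ℝ) / ((n : ℝ) + 2) ^ d ≤ 1 / 2 := by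
    intro d
    rw [div_le_iff₀ (hpos d)]
    have h1 : (fword w d : ℝ) ≤ ((univ.filter (Canon (n := n) (d := d))).card : ℝ) := by
      exact_mod_cast fword_le hn1 w
    have h2 := hcast d
    have h3 : (0:ℝ) ≤ (n:ℝ)^d := by positivity
    linarith
  have hlb : ∀ d : ℕ, lo d ≤ (fword w d : ℝ) / ((n : ℝ) + 2) ^ d := by
    intro d
    have hC_le : (((univ.filter (Canon (n := n) (d := d))).card : ℝ))
        ≤ (fword w d : ℝ) + (n : ℝ)^2 * ((n : ℝ) + 19/10) ^ d := by
      have ha : (univ.filter (Canon (n := n) (d := d))).card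
          ≤ fword w d + (univ.filter fun ω : Fin d → Coord n => ¬ Good ω).card := by
        have := card_canon_le_good_add_bad (n := n) (d := d)
        have h2 := fword_ge (d := d) hn0 w hpal
        omega
      have hb := card_bad_le (n := n) (d := d)
      have ha' : (((univ.filter (Canon (n := n) (d := d))).card : ℝ))
          ≤ (fword w d : ℝ) + (((univ.filter fun ω : Fin d → Coord n => ¬ Good ω).card : ℝ)) := by
        exact_mod_cast ha
      linarith
    rw [hlo, div_le_div_iff₀ (hpos d) (hpos d)]
    apply mul_le_mul_of_nonneg_right ?_ (hpos d).le
    have h2 := hcast d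
    linarith
  have hlolim : Tendsto lo atTop (nhds (1 / 2)) := by
    have heq : lo = fun d : ℕ => 1/2 - (1/2) * ((n:ℝ)/((n:ℝ)+2))^d
        - (n:ℝ)^2 * (((n:ℝ)+19/10)/((n:ℝ)+2))^d := by
      funext d
      rw [hlo]
      have hne : ((n : ℝ) + 2) ^ d ≠ 0 := (hpos d).ne'
      rw [div_pow, div_pow]
      field_simp
    rw [heq]
    have hr1 : Tendsto (fun d : ℕ => ((n:ℝ)/((n:ℝ)+2))^d) atTop (nhds 0) := by
      apply tendsto_pow_atTop_nhds_zero_of_lt_one (by positivity)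
      rw [div_lt_one (by positivity)]
      linarith
    have hr2 : Tendsto (fun d : ℕ => (((n:ℝ)+19/10)/((n:ℝ)+2))^d) atTop (nhds 0) := by
      apply tendsto_pow_atTop_nhds_zero_of_lt_one (by positivity)
      rw [div_lt_one (by positivity)]
      linarith
    have := ((tendsto_const_nhds (x := (1/2:ℝ)) (f := atTop)).sub
      (hr1.const_mul (1/2 : ℝ))).sub (hr2.const_mul ((n:ℝ)^2))
    simpa using this
  exact tendsto_of_tendsto_of_tendsto_of_le_of_le hlolim tendsto_const_nhds hlb hub

end WordGridHD
end
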